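/- arXiv:math/0701343 — 9 statements merged into one kernel-verified Lean document; each statement's English description precedes it below -/
import Mathlib

section
/- Let L be a number field. For every algebraic integer α ∈ O_L one has Σ_σ |σ(α)|² − Σ_σ Re(σ(α)) ≥ Σ_σ |σ(α)|² − Σ_σ |σ(α)| ≥ 0, where all sums range over the [L:ℚ] field embeddings σ : L → ℂ. -/
open NumberField

/-- Product over all embeddings of the absolute values equals the absolute value of the norm. -/
lemma aux_prod_abs (L : Type*) [Field L] [NumberField L] (x : L) :
    ∏ σ : L →+* ℂ, ‖σ x‖ = |Algebra.norm ℚ x| := by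
  have h := congr_arg (‖·‖)
    (Algebra.norm_eq_prod_embeddings ℚ ℂ x)
  rw [norm_prod] at h
  rw [Fintype.prod_equiv (RingHom.equivRatAlgHom _ _) (fun σ => ‖σ x‖)
    (fun φ => ‖φ x‖) (fun _ => by simp [RingHom.equivRatAlgHom_apply])]
  rw [← h, eq_ratCast, Complex.norm_ratCast, Rat.cast_abs]

/-- For a nonzero algebraic integer, the sum of absolute values of its images under all
embeddings is at least the number of embeddings. -/
lemma aux_sum_abs (L : Type*) [Field L] [NumberField L] (α : 𝓞 L) (hα : α ≠ 0) :
    (Fintype.card (L →+* ℂ) : ℝ) ≤ ∑ σ : L →+* ℂ, ‖σ (α : L)‖ := by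
  set n := Fintype.card (L →+* ℂ) with hn
  have hnpos : 0 < n := Fintype.card_pos
  have hnorm : (1 : ℝ) ≤ |Algebra.norm ℚ (α : L)| := by
    rw [← Algebra.coe_norm_int, ← Int.cast_one, ← Int.cast_abs, Rat.cast_intCast, Int.cast_le]
    exact Int.one_le_abs (Algebra.norm_ne_zero_iff.mpr hα)
  have hprod : (1 : ℝ) ≤ ∏ σ : L →+* ℂ, ‖σ (α : L)‖ := by
    rw [aux_prod_abs]; exact hnorm
  have hwsum : ∑ _σ : L →+* ℂ, ((n : ℝ)⁻¹) = 1 := by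
    simp [Finset.sum_const, hn]
  have hamgm := Real.geom_mean_le_arith_mean_weighted Finset.univ
    (fun _ : L →+* ℂ => (n : ℝ)⁻¹) (fun σ => ‖σ (α : L)‖)
    (fun _ _ => by positivity) hwsum (fun _ _ => norm_nonneg _)
  have hleft : (1 : ℝ) ≤ ∏ σ : L →+* ℂ, ‖σ (α : L)‖ ^ ((n : ℝ)⁻¹) := by
    rw [Real.finset_prod_rpow _ _ (fun _ _ => norm_nonneg _)]
    exact Real.one_le_rpow hprod (by positivity)
  have h1 : (1 : ℝ) ≤ ∑ σ : L →+* ℂ, (n : ℝ)⁻¹ * ‖σ (α : L)‖ :=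
    le_trans hleft hamgm
  rw [← Finset.mul_sum] at h1
  have hn' : (0:ℝ) < (n:ℝ) := by positivity
  rwa [inv_mul_eq_div, le_div_iff₀ hn', one_mul] at h1

/-- Lemma 5.8 of Bost–Künnemann: for any algebraic integer `α` in a number field `L`,
`Σ_σ |σ(α)|² − Σ_σ Re(σ(α)) ≥ Σ_σ |σ(α)|² − Σ_σ |σ(α)| ≥ 0`,
the sums ranging over all field embeddings `σ : L → ℂ`. -/
theorem statement0 (L : Type*) [Field L] [NumberField L] (α : 𝓞 L) :
    ((∑ σ : L →+* ℂ, ‖σ (α : L)‖ ^ 2) -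
        ∑ σ : L →+* ℂ, (σ (α : L)).re ≥
      (∑ σ : L →+* ℂ, ‖σ (α : L)‖ ^ 2) -
        ∑ σ : L →+* ℂ, ‖σ (α : L)‖) ∧
    ((∑ σ : L →+* ℂ, ‖σ (α : L)‖ ^ 2) -
        ∑ σ : L →+* ℂ, ‖σ (α : L)‖ ≥ 0) := by
  constructor
  · have : ∑ σ : L →+* ℂ, (σ (α : L)).re ≤ ∑ σ : L →+* ℂ, ‖σ (α : L)‖ :=
      Finset.sum_le_sum fun σ _ => Complex.re_le_norm _
    linarith
  · by_cases hα : α = 0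
    · simp [hα]
    · have h1 : (Fintype.card (L →+* ℂ) : ℝ) ≤ ∑ σ : L →+* ℂ, ‖σ (α : L)‖ :=
        aux_sum_abs L α hα
    -- pointwise : t² - t ≥ t - 1
      have h2 : ∑ σ : L →+* ℂ, (‖σ (α : L)‖ - 1) ≤
          ∑ σ : L →+* ℂ, (‖σ (α : L)‖ ^ 2 - ‖σ (α : L)‖) :=
        Finset.sum_le_sum fun σ _ => by nlinarith [sq_nonneg (‖σ (α : L)‖ - 1)]
      rw [Finset.sum_sub_distrib, Finset.sum_sub_distrib, Finset.sum_const,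
        Finset.card_univ, nsmul_eq_mul, mul_one] at h2
      linarith
end

section
/- Let L be a number field and let w be a real number. Then the infimum over β ∈ O_L of Σ_σ |w − σ(β)|² (the sum over all field embeddings σ : L → ℂ) equals [L:ℚ]·min_{m∈ℤ} (w − m)², and this infimum is attained at every integer m ∈ ℤ ⊆ O_L nearest to w. -/
open NumberField

section aux

variable (L : Type*) [Field L] [NumberField L]

private lemma inf_eq_of_nearest (w : ℝ) (m : ℤ) (h : ∀ m' : ℤ, |w - (m : ℝ)| ≤ |w - (m' : ℝ)|) :
    (⨅ m' : ℤ, (w - (m' : ℝ)) ^ 2) = (w - (m : ℝ)) ^ 2 := by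
  have hbdd : BddBelow (Set.range fun m' : ℤ => (w - (m' : ℝ)) ^ 2) := by
    refine ⟨0, ?_⟩
    rintro x ⟨m', rfl⟩
    positivity
  refine le_antisymm (ciInf_le hbdd m) (le_ciInf fun m' => ?_)
  calc (w - (m : ℝ)) ^ 2 = |w - (m : ℝ)| ^ 2 := (sq_abs _).symm
    _ ≤ |w - (m' : ℝ)| ^ 2 := by
        exact pow_le_pow_left₀ (abs_nonneg _) (h m') 2
    _ = (w - (m' : ℝ)) ^ 2 := sq_abs _

private lemma prod_abs_eq_abs_norm (x : L) :
    ∏ σ : L →+* ℂ, ‖σ x‖ = |Algebra.norm ℚ x| := by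
  have h := congr_arg norm
    (Algebra.norm_eq_prod_embeddings ℚ (E := ℂ) (x := x))
  rw [norm_prod] at h
  rw [Fintype.prod_equiv (RingHom.equivRatAlgHom L ℂ) (fun φ => ‖φ x‖)
      (fun f => ‖f x‖) (fun _ => by simp [RingHom.equivRatAlgHom_apply])]
  rw [← h, eq_ratCast, Rat.cast_abs, ← Real.norm_eq_abs, ← Complex.norm_real, Complex.ofReal_ratCast]

/-- For a nonzero algebraic integer, the sum of `|σ α|²` is at least `n`. -/
private lemma sum_sq_ge_card (α : 𝓞 L) (hα : α ≠ 0) :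
    (Fintype.card (L →+* ℂ) : ℝ) ≤ ∑ σ : L →+* ℂ, ‖σ (α : L)‖ ^ 2 := by
  set n := Fintype.card (L →+* ℂ) with hn
  have hnpos : 0 < n := Fintype.card_pos
  -- the product of the `|σ α|²` is at least 1
  have hprod : (1 : ℝ) ≤ ∏ σ : L →+* ℂ, ‖σ (α : L)‖ ^ 2 := by
    have h1 : ∏ σ : L →+* ℂ, ‖σ (α : L)‖ = |Algebra.norm ℚ (α : L)| :=
      prod_abs_eq_abs_norm L (α : L)
    have h2 : (Algebra.norm ℤ α : ℚ) = Algebra.norm ℚ (α : L) := Algebra.coe_norm_int α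
    have h3 : Algebra.norm ℤ α ≠ 0 := by
      intro h0
      have : Algebra.norm ℚ (α : L) = 0 := by rw [← h2, h0]; norm_num
      rw [Algebra.norm_eq_zero_iff] at this
      exact hα (RingOfIntegers.coe_eq_zero_iff.mp this)
    have h4 : (1 : ℚ) ≤ |Algebra.norm ℚ (α : L)| := by
      rw [← h2]
      have := Int.one_le_abs h3
      exact_mod_cast this
    have h5 : (1 : ℝ) ≤ ∏ σ : L →+* ℂ, ‖σ (α : L)‖ := by
      rw [h1]; exact_mod_cast h4
    calc (1 : ℝ) = 1 * 1 := by ring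
      _ ≤ (∏ σ : L →+* ℂ, ‖σ (α : L)‖) *
          (∏ σ : L →+* ℂ, ‖σ (α : L)‖) := by
            exact mul_le_mul h5 h5 zero_le_one (le_trans zero_le_one h5)
      _ = ∏ σ : L →+* ℂ, ‖σ (α : L)‖ ^ 2 := by
            rw [← Finset.prod_mul_distrib]; simp [sq]
  -- AM-GM
  have hgm := Real.geom_mean_le_arith_mean_weighted Finset.univ
      (fun _ : L →+* ℂ => (n : ℝ)⁻¹) (fun σ => ‖σ (α : L)‖ ^ 2)
      (fun _ _ => by positivity)
      (by simp [Finset.card_univ, ← hn, mul_inv_cancel₀ (by positivity : (n:ℝ) ≠ 0)])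
      (fun _ _ => by positivity)
  have hL : (1 : ℝ) ≤ ∏ σ : L →+* ℂ, (‖σ (α : L)‖ ^ 2) ^ (n : ℝ)⁻¹ := by
    rw [Real.finset_prod_rpow _ _ (fun i _ => by positivity) _]
    calc (1:ℝ) = 1 ^ (n : ℝ)⁻¹ := (Real.one_rpow _).symm
      _ ≤ (∏ σ : L →+* ℂ, ‖σ (α : L)‖ ^ 2) ^ (n : ℝ)⁻¹ :=
          Real.rpow_le_rpow zero_le_one hprod (by positivity)
  have := le_trans hL hgm
  rw [← Finset.mul_sum] at this
  calc (n : ℝ) = n * 1 := by ring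
    _ ≤ n * ((n : ℝ)⁻¹ * ∑ σ : L →+* ℂ, ‖σ (α : L)‖ ^ 2) := by
        exact mul_le_mul_of_nonneg_left this (by positivity)
    _ = ∑ σ : L →+* ℂ, ‖σ (α : L)‖ ^ 2 := by
        field_simp

private lemma two_mul_add_one_ne (γ : 𝓞 L) : (2 : 𝓞 L) * γ + 1 ≠ 0 := by
  intro h
  have h1 : (2 : L) * (γ : L) + 1 = 0 := by
    have := congrArg (algebraMap (𝓞 L) L) h
    push_cast at this
    simpa [RingOfIntegers.coe_eq_algebraMap, show (algebraMap (𝓞 L) L) 2 = 2 by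
      rw [show (2 : 𝓞 L) = 1 + 1 by norm_num, map_add, map_one]; norm_num] using this
  have h2 : (γ : L) = algebraMap ℚ L (-(1/2)) := by
    rw [eq_ratCast (algebraMap ℚ L)]
    push_cast
    linear_combination h1 / 2
  have h3 : IsIntegral ℤ ((γ : L)) := RingOfIntegers.isIntegral_coe γ
  rw [h2, isIntegral_algebraMap_iff (algebraMap ℚ L).injective] at h3
  obtain ⟨y, hy⟩ := IsIntegrallyClosed.isIntegral_iff.mp h3
  have h4 : (2 * y : ℚ) = -1 := by
    have : (y : ℚ) = -(1/2) := by exact_mod_cast hy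
    rw [this]; ring
  have h5 : (2 * y : ℤ) = -1 := by exact_mod_cast h4
  omega

private lemma two_mul_sub_one_ne (γ : 𝓞 L) : (2 : 𝓞 L) * γ - 1 ≠ 0 := by
  intro h
  apply two_mul_add_one_ne L (-γ)
  linear_combination -h

end aux

/-- Rank-one case of Proposition 5.5: for a real number `w`, the infimum over `β ∈ 𝓞_L` of
`Σ_σ |w − σ(β)|²` is attained and equals `[L:ℚ] · min_{m ∈ ℤ} (w − m)²`; moreover it is
attained at every integer `m` nearest to `w`. -/
theorem statement3 (L : Type*) [Field L] [NumberField L] (w : ℝ) :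
    IsLeast {x : ℝ | ∃ β : 𝓞 L, x = ∑ σ : L →+* ℂ, ‖(w : ℂ) - σ (β : L)‖ ^ 2}
        ((Module.finrank ℚ L : ℝ) * ⨅ m : ℤ, (w - (m : ℝ)) ^ 2) ∧
      ∀ m : ℤ, (∀ m' : ℤ, |w - (m : ℝ)| ≤ |w - (m' : ℝ)|) →
        (∑ σ : L →+* ℂ, ‖(w : ℂ) - σ (((m : 𝓞 L)) : L)‖ ^ 2) =
          (Module.finrank ℚ L : ℝ) * ⨅ m' : ℤ, (w - (m' : ℝ)) ^ 2 := by
  have hcard : Fintype.card (L →+* ℂ) = Module.finrank ℚ L := NumberField.Embeddings.card L ℂ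
  -- value of the sum at an integer
  have hval : ∀ m : ℤ, (∑ σ : L →+* ℂ, ‖(w : ℂ) - σ (((m : 𝓞 L)) : L)‖ ^ 2)
      = (Module.finrank ℚ L : ℝ) * (w - (m : ℝ)) ^ 2 := by
    intro m
    have hterm : ∀ σ : L →+* ℂ,
        ‖(w : ℂ) - σ (((m : 𝓞 L)) : L)‖ ^ 2 = (w - (m : ℝ)) ^ 2 := by
      intro σ
      have h1 : (((m : 𝓞 L)) : L) = (m : L) := by rw [RingOfIntegers.coe_eq_algebraMap]; exact map_intCast _ m
      rw [h1, map_intCast, show (w : ℂ) - (m : ℂ) = ((w - (m : ℝ) : ℝ) : ℂ) by push_cast; ring,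
        Complex.norm_real, Real.norm_eq_abs, sq_abs]
    rw [Finset.sum_congr rfl (fun σ _ => hterm σ), Finset.sum_const, Finset.card_univ, hcard,
      nsmul_eq_mul]
  -- the main lower bound
  have hmain : ∀ (β : 𝓞 L) (m : ℤ), (∀ m' : ℤ, |w - (m : ℝ)| ≤ |w - (m' : ℝ)|) →
      (Module.finrank ℚ L : ℝ) * (w - (m : ℝ)) ^ 2
        ≤ ∑ σ : L →+* ℂ, ‖(w : ℂ) - σ (β : L)‖ ^ 2 := by
    intro β m hm
    set d : ℝ := w - (m : ℝ) with hd_def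
    have hd : |d| ≤ 1 / 2 := le_trans (hm (round w)) (abs_sub_round w)
    set γ : 𝓞 L := β - (m : 𝓞 L) with hγ
    have hγL : (γ : L) = (β : L) - (m : L) := by
      rw [hγ, RingOfIntegers.coe_eq_algebraMap, map_sub, map_intCast]
    set n : ℕ := Fintype.card (L →+* ℂ) with hn
    set S : ℝ := ∑ σ : L →+* ℂ, ((σ (γ : L)).re ^ 2 + (σ (γ : L)).im ^ 2) with hS
    set T : ℝ := ∑ σ : L →+* ℂ, (σ (γ : L)).re with hT
    -- expansion of each term
    have hterm : ∀ σ : L →+* ℂ, ‖(w : ℂ) - σ (β : L)‖ ^ 2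
        = d ^ 2 - 2 * d * (σ (γ : L)).re + ((σ (γ : L)).re ^ 2 + (σ (γ : L)).im ^ 2) := by
      intro σ
      have h1 : (w : ℂ) - σ (β : L) = (d : ℂ) - σ (γ : L) := by
        rw [hγL, map_sub, map_intCast, hd_def]
        push_cast
        ring
      rw [h1, Complex.sq_norm, Complex.normSq_apply]
      simp only [Complex.sub_re, Complex.sub_im, Complex.ofReal_re, Complex.ofReal_im]
      ring
    have hsum : ∑ σ : L →+* ℂ, ‖(w : ℂ) - σ (β : L)‖ ^ 2
        = (n : ℝ) * d ^ 2 - 2 * d * T + S := by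
      rw [Finset.sum_congr rfl (fun σ _ => hterm σ)]
      rw [Finset.sum_add_distrib, Finset.sum_sub_distrib, ← Finset.mul_sum, Finset.sum_const,
        Finset.card_univ, nsmul_eq_mul, ← hn, ← hT, ← hS]
    -- `S + T ≥ 0` from the key integrality lemma applied to `2γ + 1`
    have hplus : 0 ≤ S + T := by
      have hα : (((2 * γ + 1 : 𝓞 L)) : L) = 2 * (γ : L) + 1 := by
        rw [RingOfIntegers.coe_eq_algebraMap, map_add, map_mul, map_one, map_ofNat]
      have h := sum_sq_ge_card L (2 * γ + 1) (two_mul_add_one_ne L γ)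
      have hterm2 : ∀ σ : L →+* ℂ, ‖σ (((2 * γ + 1 : 𝓞 L)) : L)‖ ^ 2
          = 4 * ((σ (γ : L)).re ^ 2 + (σ (γ : L)).im ^ 2) + 4 * (σ (γ : L)).re + 1 := by
        intro σ
        rw [hα, map_add, map_mul, map_one, map_ofNat, Complex.sq_norm, Complex.normSq_apply]
        simp only [Complex.add_re, Complex.add_im, Complex.mul_re, Complex.mul_im,
          Complex.one_re, Complex.one_im, Complex.re_ofNat, Complex.im_ofNat]
        ring
      rw [Finset.sum_congr rfl (fun σ _ => hterm2 σ), Finset.sum_add_distrib,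
        Finset.sum_add_distrib, ← Finset.mul_sum, ← Finset.mul_sum, Finset.sum_const,
        Finset.card_univ, nsmul_eq_mul, mul_one, ← hn, ← hS, ← hT] at h
      linarith
    -- `S - T ≥ 0` from the key integrality lemma applied to `2γ - 1`
    have hminus : 0 ≤ S - T := by
      have hα : (((2 * γ - 1 : 𝓞 L)) : L) = 2 * (γ : L) - 1 := by
        rw [RingOfIntegers.coe_eq_algebraMap, map_sub, map_mul, map_one, map_ofNat]
      have h := sum_sq_ge_card L (2 * γ - 1) (two_mul_sub_one_ne L γ)
      have hterm2 : ∀ σ : L →+* ℂ, ‖σ (((2 * γ - 1 : 𝓞 L)) : L)‖ ^ 2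
          = 4 * ((σ (γ : L)).re ^ 2 + (σ (γ : L)).im ^ 2) - 4 * (σ (γ : L)).re + 1 := by
        intro σ
        rw [hα, map_sub, map_mul, map_one, map_ofNat, Complex.sq_norm, Complex.normSq_apply]
        simp only [Complex.sub_re, Complex.sub_im, Complex.mul_re, Complex.mul_im,
          Complex.one_re, Complex.one_im, Complex.re_ofNat, Complex.im_ofNat]
        ring
      rw [Finset.sum_congr rfl (fun σ _ => hterm2 σ), Finset.sum_add_distrib,
        Finset.sum_sub_distrib, ← Finset.mul_sum, ← Finset.mul_sum, Finset.sum_const,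
        Finset.card_univ, nsmul_eq_mul, mul_one, ← hn, ← hS, ← hT] at h
      linarith
    have hTS : 2 * d * T ≤ S := by
      have h1 : 2 * d * T ≤ 2 * |d| * |T| := by
        calc 2 * d * T ≤ |2 * d * T| := le_abs_self _
          _ = 2 * |d| * |T| := by rw [abs_mul, abs_mul, abs_two]
      have h2 : 2 * |d| * |T| ≤ |T| := by nlinarith [abs_nonneg T]
      have h3 : |T| ≤ S := abs_le.mpr ⟨by linarith, by linarith⟩
      linarith
    have hnn : (n : ℝ) = (Module.finrank ℚ L : ℝ) := by exact_mod_cast congrArg Nat.cast hcard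
    rw [hsum, ← hnn]
    linarith
  constructor
  · constructor
    · exact ⟨((round w : ℤ) : 𝓞 L), by
        rw [hval (round w), inf_eq_of_nearest w (round w) (fun m' => round_le w m')]⟩
    · rintro x ⟨β, rfl⟩
      rw [inf_eq_of_nearest w (round w) (fun m' => round_le w m')]
      exact hmain β (round w) (fun m' => round_le w m')
  · intro m hm
    rw [hval m, inf_eq_of_nearest w m hm]
end

section
/- Let L be a number field, let n ≥ 1 and 1 ≤ i ≤ n be integers, and set j = n + 1 − i. For any algebraic integers β₀, …, βₙ ∈ O_L with β₀ + ⋯ + βₙ = 0 one has 2 Σ_σ [ Σ_{0 ≤ k ≤ i−1} (j/(n+1)) Re σ(β_k) − Σ_{i ≤ k ≤ n} (i/(n+1)) Re σ(β_k) ] ≤ Σ_σ Σ_{0 ≤ k ≤ n} |σ(β_k)|², where σ ranges over all field embeddings of L into ℂ. -/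
open NumberField Finset

private lemma prod_abs_embeddings {L : Type*} [Field L] [NumberField L] (x : L) :
    ∏ σ : L →+* ℂ, ‖σ x‖ = |((Algebra.norm ℚ x : ℚ) : ℝ)| := by
  have h := congr_arg (‖·‖) (Algebra.norm_eq_prod_embeddings ℚ ℂ (x := x))
  rw [norm_prod] at h
  rw [Fintype.prod_equiv (RingHom.equivRatAlgHom L ℂ) (fun σ : L →+* ℂ => ‖σ x‖)
      (fun φ : L →ₐ[ℚ] ℂ => ‖φ x‖)
      (fun σ => by simp [RingHom.equivRatAlgHom_apply]), ← h, eq_ratCast]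
  rw [show ((Algebra.norm ℚ x : ℚ) : ℂ) = (((Algebra.norm ℚ x : ℚ) : ℝ) : ℂ) by push_cast; rfl,
    Complex.norm_real, Real.norm_eq_abs]

/-- For a nonzero algebraic integer `γ`, `∑_σ |σ γ|² ≥ [L:ℚ]` (AM–GM plus `|N(γ)| ≥ 1`). -/
private lemma card_le_sum_sq {L : Type*} [Field L] [NumberField L] (γ : 𝓞 L) (hγ : γ ≠ 0) :
    (Fintype.card (L →+* ℂ) : ℝ) ≤ ∑ σ : L →+* ℂ, ‖σ (γ : L)‖ ^ 2 := by
  set d := Fintype.card (L →+* ℂ) with hd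
  have hd0 : 0 < d := Fintype.card_pos
  have hz : ∀ σ : L →+* ℂ, (0 : ℝ) ≤ ‖σ (γ : L)‖ ^ 2 := fun σ => sq_nonneg _
  -- the product of the `|σ γ|²` is at least 1
  have hnorm : (1 : ℝ) ≤ ∏ σ : L →+* ℂ, ‖σ (γ : L)‖ ^ 2 := by
    rw [Finset.prod_pow, prod_abs_embeddings]
    have hne : Algebra.norm ℤ γ ≠ 0 := by
      intro h
      have h2 : Algebra.norm ℚ (γ : L) = 0 := by
        rw [← Algebra.coe_norm_int, h]; norm_num
      rw [Algebra.norm_eq_zero_iff] at h2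
      exact hγ (by exact_mod_cast h2)
    have h1 : (1 : ℤ) ≤ |Algebra.norm ℤ γ| := Int.one_le_abs hne
    have h2 : (1 : ℝ) ≤ |((Algebra.norm ℚ (γ : L) : ℚ) : ℝ)| := by
      rw [← Algebra.coe_norm_int]
      push_cast
      rw [← Int.cast_abs]
      exact_mod_cast h1
    nlinarith [h2]
  have key := Real.geom_mean_le_arith_mean_weighted Finset.univ (fun _ : (L →+* ℂ) => (d : ℝ)⁻¹)
      (fun σ => ‖σ (γ : L)‖ ^ 2) (fun _ _ => by positivity)
      (by simp [Finset.sum_const, ← hd]) (fun σ _ => hz σ)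
  have hL : (1 : ℝ) ≤ ∏ σ : L →+* ℂ, (‖σ (γ : L)‖ ^ 2) ^ ((d : ℝ)⁻¹) := by
    rw [Real.finset_prod_rpow _ _ (fun σ _ => hz σ)]
    calc (1 : ℝ) = 1 ^ ((d : ℝ)⁻¹) := (Real.one_rpow _).symm
      _ ≤ _ := Real.rpow_le_rpow zero_le_one hnorm (by positivity)
  have h3 : (1 : ℝ) ≤ ∑ σ : L →+* ℂ, (d : ℝ)⁻¹ * (‖σ (γ : L)‖ ^ 2) := hL.trans key
  rw [← Finset.mul_sum] at h3
  have hd' : (0 : ℝ) < (d : ℝ) := by exact_mod_cast hd0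
  calc (d : ℝ) = (d : ℝ) * 1 := by ring
    _ ≤ (d : ℝ) * ((d : ℝ)⁻¹ * ∑ σ : L →+* ℂ, ‖σ (γ : L)‖ ^ 2) := by
        exact mul_le_mul_of_nonneg_left h3 hd'.le
    _ = ∑ σ : L →+* ℂ, ‖σ (γ : L)‖ ^ 2 := by field_simp

/-- Key inequality: if `∑ γ_k = -c` with `c ≥ 1`, then `∑_σ ∑_k |σ γ_k|² ≥ d·c`. -/
private lemma key_ineq {L : Type*} [Field L] [NumberField L] (m c : ℕ) (hc : 1 ≤ c)
    (γ : Fin m → 𝓞 L) (hγ : ∑ k, γ k = -(c : 𝓞 L)) :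
    (Fintype.card (L →+* ℂ) : ℝ) * c ≤ ∑ σ : L →+* ℂ, ∑ k, ‖σ (γ k : L)‖ ^ 2 := by
  classical
  set d := Fintype.card (L →+* ℂ) with hd
  set S := Finset.univ.filter (fun k : Fin m => γ k ≠ 0) with hS
  have hzero : ∀ k ∉ S, (γ k : L) = 0 := by
    intro k hk
    simp only [hS, Finset.mem_filter, Finset.mem_univ, true_and, not_not] at hk
    rw [hk]; simp
  have hrestrict : ∀ σ : L →+* ℂ,
      ∑ k, ‖σ (γ k : L)‖ ^ 2 = ∑ k ∈ S, ‖σ (γ k : L)‖ ^ 2 := by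
    intro σ
    refine (Finset.sum_subset (Finset.subset_univ S) ?_).symm
    intro k _ hk
    rw [hzero k hk]; simp
  have hSsum : ∀ σ : L →+* ℂ, ∑ k ∈ S, σ (γ k : L) = -(c : ℂ) := by
    intro σ
    have h0 : ∑ k, (γ k : L) = -(c : L) := by
      have h := congr_arg (algebraMap (𝓞 L) L) hγ
      rw [map_sum, map_neg, map_natCast] at h
      exact h
    calc ∑ k ∈ S, σ (γ k : L) = ∑ k, σ (γ k : L) :=
          Finset.sum_subset (Finset.subset_univ S) (fun k _ hk => by rw [hzero k hk]; simp)
      _ = σ (∑ k, (γ k : L)) := (map_sum σ _ _).symm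
      _ = -(c : ℂ) := by rw [h0]; simp
  have hScard : 1 ≤ S.card := by
    rw [Nat.one_le_iff_ne_zero]
    intro h
    rw [Finset.card_eq_zero] at h
    have : ∑ k, γ k = 0 := Finset.sum_eq_zero fun k _ => by
      by_contra hne
      exact Finset.notMem_empty k (h ▸ (Finset.mem_filter.2 ⟨Finset.mem_univ k, hne⟩))
    rw [hγ] at this
    have : (c : 𝓞 L) = 0 := by linear_combination -this
    exact (Nat.cast_ne_zero.2 (by omega) : (c : 𝓞 L) ≠ 0) this
  by_cases hcs : c ≤ S.card
  · have h1 : (d : ℝ) * c ≤ ∑ k ∈ S, ∑ σ : L →+* ℂ, ‖σ (γ k : L)‖ ^ 2 := by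
      calc (d : ℝ) * c ≤ (d : ℝ) * S.card := by
            have : (c : ℝ) ≤ (S.card : ℝ) := by exact_mod_cast hcs
            nlinarith [this, (by positivity : (0:ℝ) ≤ (d:ℝ))]
        _ = ∑ _k ∈ S, (d : ℝ) := by rw [Finset.sum_const, nsmul_eq_mul]; ring
        _ ≤ _ := Finset.sum_le_sum fun k hk =>
            card_le_sum_sq (γ k) (Finset.mem_filter.1 hk).2
    calc (d : ℝ) * c ≤ ∑ k ∈ S, ∑ σ : L →+* ℂ, ‖σ (γ k : L)‖ ^ 2 := h1
      _ = ∑ σ : L →+* ℂ, ∑ k ∈ S, ‖σ (γ k : L)‖ ^ 2 := Finset.sum_comm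
      _ = ∑ σ : L →+* ℂ, ∑ k, ‖σ (γ k : L)‖ ^ 2 := by
          exact Finset.sum_congr rfl fun σ _ => (hrestrict σ).symm
  · push_neg at hcs
    have hper : ∀ σ : L →+* ℂ, (c : ℝ) ≤ ∑ k ∈ S, ‖σ (γ k : L)‖ ^ 2 := by
      intro σ
      have h1 : (c : ℝ) ≤ ∑ k ∈ S, ‖σ (γ k : L)‖ := by
        calc (c : ℝ) = ‖-(c : ℂ)‖ := by
              rw [norm_neg]; rw [Complex.norm_natCast]
          _ = ‖∑ k ∈ S, σ (γ k : L)‖ := by rw [hSsum σ]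
          _ ≤ ∑ k ∈ S, ‖σ (γ k : L)‖ := norm_sum_le _ _
      have h2 : (∑ k ∈ S, ‖σ (γ k : L)‖) ^ 2
          ≤ (S.card : ℝ) * ∑ k ∈ S, ‖σ (γ k : L)‖ ^ 2 :=
        sq_sum_le_card_mul_sum_sq
      have hc0 : (0 : ℝ) < (c : ℝ) := by exact_mod_cast hc
      have hcard : (S.card : ℝ) ≤ (c : ℝ) := by exact_mod_cast hcs.le
      have hsq : (0 : ℝ) ≤ ∑ k ∈ S, ‖σ (γ k : L)‖ ^ 2 :=
        Finset.sum_nonneg fun k _ => sq_nonneg _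
      nlinarith [h1, h2, hc0, hcard, hsq]
    calc (d : ℝ) * c = ∑ _σ : L →+* ℂ, (c : ℝ) := by
          rw [Finset.sum_const, nsmul_eq_mul]; rfl
      _ ≤ ∑ σ : L →+* ℂ, ∑ k ∈ S, ‖σ (γ k : L)‖ ^ 2 :=
          Finset.sum_le_sum fun σ _ => hper σ
      _ = ∑ σ : L →+* ℂ, ∑ k, ‖σ (γ k : L)‖ ^ 2 :=
          Finset.sum_congr rfl fun σ _ => (hrestrict σ).symm

/-- Lemma 5.13 (the condition P(L/ℚ, Aₙ) at the vertex [i] of the Voronoi cell of the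
root lattice Aₙ): for algebraic integers `β₀, …, βₙ` with zero sum, and `1 ≤ i ≤ n`,
`j = n + 1 − i`,
`2 Σ_σ [Σ_{k<i} (j/(n+1)) Re σ(β_k) − Σ_{k≥i} (i/(n+1)) Re σ(β_k)] ≤ Σ_σ Σ_k |σ(β_k)|²`. -/
theorem statement4 (L : Type*) [Field L] [NumberField L] (n i : ℕ) (hn : 1 ≤ n)
    (hi : 1 ≤ i) (hin : i ≤ n) (β : Fin (n + 1) → 𝓞 L)
    (hsum : ∑ k, β k = 0) :
    2 * ∑ σ : L →+* ℂ,
        ((∑ k ∈ Finset.univ.filter (fun k : Fin (n + 1) => (k : ℕ) < i),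
            (((n : ℝ) + 1 - i) / ((n : ℝ) + 1)) * (σ (β k : L)).re) -
          ∑ k ∈ Finset.univ.filter (fun k : Fin (n + 1) => i ≤ (k : ℕ)),
            ((i : ℝ) / ((n : ℝ) + 1)) * (σ (β k : L)).re) ≤
      ∑ σ : L →+* ℂ, ∑ k : Fin (n + 1), ‖σ (β k : L)‖ ^ 2 := by
  classical
  set d := Fintype.card (L →+* ℂ) with hd
  set F1 := Finset.univ.filter (fun k : Fin (n + 1) => (k : ℕ) < i) with hF1
  set F2 := Finset.univ.filter (fun k : Fin (n + 1) => i ≤ (k : ℕ)) with hF2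
  have hF2' : F2 = Finset.univ.filter (fun k : Fin (n + 1) => ¬ (k : ℕ) < i) := by
    rw [hF2]; simp only [not_lt]
  -- the split of `univ` into `F1` and `F2`
  have hsplit : ∀ f : Fin (n + 1) → ℝ, ∑ k ∈ F1, f k + ∑ k ∈ F2, f k = ∑ k, f k := by
    intro f
    rw [hF1, hF2']
    exact Finset.sum_filter_add_sum_filter_not _ _ f
  -- the images of the β's sum to zero under every embedding
  have hσ0 : ∀ σ : L →+* ℂ, ∑ k, (σ (β k : L)).re = 0 := by
    intro σ
    have h0 : ∑ k, (β k : L) = 0 := by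
      have h := congr_arg (algebraMap (𝓞 L) L) hsum
      rw [map_sum, map_zero] at h
      exact h
    have h1 : ∑ k, σ (β k : L) = 0 := by rw [← map_sum, h0, map_zero]
    calc ∑ k, (σ (β k : L)).re = (∑ k, σ (β k : L)).re := (Complex.re_sum _ _).symm
      _ = 0 := by rw [h1]; rfl
  -- simplify the inner expression of the LHS: it equals `∑_{k<i} Re σ(β k)`
  have hinner : ∀ σ : L →+* ℂ,
      (∑ k ∈ F1, (((n : ℝ) + 1 - i) / ((n : ℝ) + 1)) * (σ (β k : L)).re) -
        ∑ k ∈ F2, ((i : ℝ) / ((n : ℝ) + 1)) * (σ (β k : L)).re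
      = ∑ k ∈ F1, (σ (β k : L)).re := by
    intro σ
    have h2 : ∑ k ∈ F2, (σ (β k : L)).re = -∑ k ∈ F1, (σ (β k : L)).re := by
      have := hsplit (fun k => (σ (β k : L)).re)
      rw [hσ0 σ] at this
      linarith
    rw [← Finset.mul_sum, ← Finset.mul_sum, h2]
    have hne : (n : ℝ) + 1 ≠ 0 := by positivity
    field_simp
    ring
  simp only [hinner]
  -- shift: γ k = β k - 1 for k < i, γ k = β k otherwise
  set γ : Fin (n + 1) → 𝓞 L := fun k => if (k : ℕ) < i then β k - 1 else β k with hγdef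
  have hcard : F1.card = i := by
    rw [hF1, Finset.card_filter, Fin.sum_univ_eq_sum_range (fun k => if k < i then 1 else 0)]
    have hsub : ∑ k ∈ Finset.range (n + 1), (if k < i then (1:ℕ) else 0)
        = ∑ k ∈ Finset.range i, (if k < i then (1:ℕ) else 0) := by
      refine (Finset.sum_subset (Finset.range_subset_range.2 (by omega)) ?_).symm
      intro k _ hk
      rw [Finset.mem_range, not_lt] at hk
      simp [Nat.not_lt.2 hk]
    rw [hsub, Finset.sum_congr rfl (fun k hk => if_pos (Finset.mem_range.1 hk))]
    simp

  have hγsum : ∑ k, γ k = -(i : 𝓞 L) := by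
    have h1 : ∑ k, γ k = ∑ k, β k - ∑ k : Fin (n + 1), (if (k : ℕ) < i then (1 : 𝓞 L) else 0) := by
      rw [← Finset.sum_sub_distrib]
      refine Finset.sum_congr rfl fun k _ => ?_
      by_cases h : (k : ℕ) < i <;> simp [hγdef, h]
    rw [h1, hsum, zero_sub]
    congr 1
    rw [Finset.sum_boole, ← hF1, hcard]
  -- pointwise identity relating |σ γ_k|² and |σ β_k|²
  have h1 : ∀ (σ : L →+* ℂ) (k : Fin (n + 1)), ‖σ (γ k : L)‖ ^ 2
      = ‖σ (β k : L)‖ ^ 2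
        + (if (k : ℕ) < i then -2 * (σ (β k : L)).re + 1 else 0) := by
    intro σ k
    by_cases h : (k : ℕ) < i
    · simp only [hγdef, if_pos h]
      have hc : ((β k - 1 : 𝓞 L) : L) = (β k : L) - 1 := by push_cast; ring
      rw [hc, map_sub, map_one]
      have habs : ∀ z : ℂ, ‖z - 1‖ ^ 2 = ‖z‖ ^ 2 - 2 * z.re + 1 := by
        intro z
        rw [Complex.sq_norm, Complex.sq_norm]
        simp only [Complex.normSq_apply, Complex.sub_re, Complex.sub_im, Complex.one_re,
          Complex.one_im]
        ring
      rw [habs]; ring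
    · simp [hγdef, h]
  have hper : ∀ σ : L →+* ℂ, ∑ k, ‖σ (γ k : L)‖ ^ 2
      = ∑ k, ‖σ (β k : L)‖ ^ 2 - 2 * ∑ k ∈ F1, (σ (β k : L)).re + i := by
    intro σ
    rw [Finset.sum_congr rfl (fun k _ => h1 σ k), Finset.sum_add_distrib, ← Finset.sum_filter,
      ← hF1]
    have h2 : ∑ k ∈ F1, (-2 * (σ (β k : L)).re + 1) = -2 * ∑ k ∈ F1, (σ (β k : L)).re + i := by
      rw [Finset.sum_add_distrib, ← Finset.mul_sum, Finset.sum_const, hcard]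
      simp [nsmul_eq_mul]
    rw [h2]; ring
  have hmain := key_ineq (L := L) (n + 1) i hi γ hγsum
  rw [← hd] at hmain
  have htotal : ∑ σ : L →+* ℂ, ∑ k, ‖σ (γ k : L)‖ ^ 2
      = ∑ σ : L →+* ℂ, ∑ k, ‖σ (β k : L)‖ ^ 2
        - 2 * ∑ σ : L →+* ℂ, ∑ k ∈ F1, (σ (β k : L)).re + (d : ℝ) * i := by
    rw [Finset.sum_congr rfl (fun σ _ => hper σ), Finset.sum_add_distrib,
      Finset.sum_sub_distrib, ← Finset.mul_sum, Finset.sum_const, Finset.card_univ, ← hd,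
      nsmul_eq_mul]
  linarith [hmain, htotal.symm.le, htotal.le]
end

section
/- Let L be a number field and n ≥ 1 an integer. For any algebraic integers β₁, …, βₙ ∈ O_L such that β₁ + ⋯ + βₙ ∈ 2O_L, the following two inequalities hold: (i) Σ_σ Σ_{k=1}^n Re σ(β_k) ≤ Σ_σ Σ_{k=1}^n |σ(β_k)|²; (ii) Σ_σ ( |σ(β₁) − 1|² + Σ_{k=2}^n |σ(β_k)|² ) ≥ [L:ℚ], where σ ranges over all field embeddings of L into ℂ. -/
open NumberField

lemma prod_abs_one_le {L : Type*} [Field L] [NumberField L] (x : 𝓞 L) (hx : x ≠ 0) :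
    1 ≤ ∏ σ : L →+* ℂ, ‖σ (x : L)‖ := by
  have hnorm := Algebra.norm_eq_prod_embeddings ℚ ℂ (x : L)
  have h1 : ∏ σ : L →+* ℂ, ‖σ (x : L)‖ = |Algebra.norm ℚ (x : L)| := by
    rw [Fintype.prod_equiv (RingHom.equivRatAlgHom L ℂ) (fun φ => ‖φ (x : L)‖)
      (fun f => ‖f (x : L)‖) (fun _ => by simp [RingHom.equivRatAlgHom_apply]),
      ← norm_prod, ← hnorm]
    rw [show (algebraMap ℚ ℂ) (Algebra.norm ℚ (x:L)) = ((Algebra.norm ℚ (x:L) : ℚ) : ℂ) from rfl]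
    rw [show ((Algebra.norm ℚ (x:L) : ℚ) : ℂ) = ((Algebra.norm ℚ (x:L) : ℚ) : ℝ) from by push_cast; ring, Complex.norm_real, Real.norm_eq_abs]
    push_cast
    ring
  rw [h1, ← Algebra.coe_norm_int]
  have hz : Algebra.norm ℤ x ≠ 0 := by
    intro h
    apply hx
    have : Algebra.norm ℚ (x : L) ≠ 0 := by
      rw [Algebra.norm_ne_zero_iff]
      exact fun h0 => hx (by exact_mod_cast RingOfIntegers.coe_eq_zero_iff.mp h0)
    rw [← Algebra.coe_norm_int, h] at this
    simp at this
  have : (1 : ℤ) ≤ |Algebra.norm ℤ x| := Int.one_le_abs hz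
  exact_mod_cast this

set_option maxHeartbeats 1000000 in
lemma keyA {L : Type*} [Field L] [NumberField L] (x : 𝓞 L) (hx : x ≠ 0) :
    (Module.finrank ℚ L : ℝ) ≤ ∑ σ : L →+* ℂ, ‖σ (x : L)‖ ^ 2 := by
  set d := Module.finrank ℚ L with hd
  have hcard : Fintype.card (L →+* ℂ) = d := Embeddings.card L ℂ
  have hdpos : 0 < d := Module.finrank_pos
  have hw : ∀ σ ∈ (Finset.univ : Finset (L →+* ℂ)), (0:ℝ) ≤ (d:ℝ)⁻¹ := by
    intro _ _; positivity
  have hw' : ∑ _σ : L →+* ℂ, (d:ℝ)⁻¹ = 1 := by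
    rw [Finset.sum_const, Finset.card_univ, hcard, nsmul_eq_mul]
    field_simp
  have hz : ∀ σ ∈ (Finset.univ : Finset (L →+* ℂ)), (0:ℝ) ≤ ‖σ (x : L)‖ ^ 2 := by
    intro _ _; positivity
  have hAM := Real.geom_mean_le_arith_mean_weighted Finset.univ (fun _ => (d:ℝ)⁻¹)
    (fun σ => ‖σ (x : L)‖ ^ 2) hw hw' hz
  have hprod : (1:ℝ) ≤ ∏ σ : L →+* ℂ, (‖σ (x : L)‖ ^ 2) ^ ((d:ℝ)⁻¹) := by
    have h1 : ∀ σ : L →+* ℂ, (‖σ (x : L)‖ ^ 2) ^ ((d:ℝ)⁻¹)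
        = (‖σ (x : L)‖ ^ ((d:ℝ)⁻¹)) ^ 2 := by
      intro σ
      rw [← Real.rpow_natCast (‖σ (x : L)‖) 2,
        ← Real.rpow_natCast (‖σ (x : L)‖ ^ ((d:ℝ)⁻¹)) 2,
        ← Real.rpow_mul (by positivity), ← Real.rpow_mul (by positivity), mul_comm]
    simp_rw [h1]
    rw [Finset.prod_pow, Real.finset_prod_rpow _ _ (fun _ _ => by positivity)]
    have := prod_abs_one_le x hx
    have h2 : (1:ℝ) ≤ (∏ σ : L →+* ℂ, ‖σ (x : L)‖) ^ ((d:ℝ)⁻¹) :=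
      Real.one_le_rpow this (by positivity)
    nlinarith
  have : (1:ℝ) ≤ ∑ σ : L →+* ℂ, (d:ℝ)⁻¹ * (‖σ (x : L)‖ ^ 2) :=
    le_trans hprod hAM
  rw [← Finset.mul_sum] at this
  rw [← mul_le_mul_iff_right₀ (show (0:ℝ) < (d:ℝ)⁻¹ by positivity)]
  calc ((d:ℝ)⁻¹ * d) = 1 := by field_simp
  _ ≤ _ := this

lemma two_mul_ne_one {L : Type*} [Field L] [NumberField L] (x : 𝓞 L) : 2 * x ≠ 1 := by
  intro h
  have hL : (2 : L) * (x : L) = 1 := by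
    have := congrArg (algebraMap (𝓞 L) L) h
    simp only [map_mul, map_one, map_ofNat] at this
    exact_mod_cast this
  have hx2 : (x : L) = algebraMap ℚ L (1/2) := by
    rw [eq_ratCast]
    push_cast
    field_simp
    linear_combination hL
  have hint : IsIntegral ℤ ((x : L)) := RingOfIntegers.isIntegral_coe x
  rw [hx2, isIntegral_algebraMap_iff (algebraMap ℚ L).injective] at hint
  obtain ⟨y, hy⟩ := IsIntegrallyClosed.isIntegral_iff.mp hint
  have : (2 : ℚ) * (y : ℚ) = 1 := by rw [show ((y:ℤ):ℚ) = algebraMap ℤ ℚ y from rfl, hy]; norm_num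
  have h3 : (2 : ℤ) * y = 1 := by exact_mod_cast this
  omega

lemma keyB {L : Type*} [Field L] [NumberField L] (b : 𝓞 L) :
    ∑ σ : L →+* ℂ, (σ (b : L)).re ≤ ∑ σ : L →+* ℂ, ‖σ (b : L)‖ ^ 2 := by
  have hne : (2 * b - 1 : 𝓞 L) ≠ 0 := fun h =>
    two_mul_ne_one b (by rwa [sub_eq_zero] at h)
  have hk := keyA (2 * b - 1) hne
  have habs : ∀ σ : L →+* ℂ, ‖σ (((2 * b - 1 : 𝓞 L) : L))‖ ^ 2
      = 4 * ‖σ (b : L)‖ ^ 2 - 4 * (σ (b : L)).re + 1 := by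
    intro σ
    have hco : ((2 * b - 1 : 𝓞 L) : L) = 2 * (b : L) - 1 := by
      push_cast
      simp only [RingOfIntegers.coe_eq_algebraMap, map_ofNat]
    rw [hco, map_sub, map_mul, map_one, map_ofNat, Complex.sq_norm, Complex.sq_norm,
      Complex.normSq_apply, Complex.normSq_apply]
    simp [Complex.sub_re, Complex.sub_im, Complex.mul_re, Complex.mul_im]
    ring
  have hsum : ∑ σ : L →+* ℂ, ‖σ (((2 * b - 1 : 𝓞 L) : L))‖ ^ 2
      = 4 * (∑ σ : L →+* ℂ, ‖σ (b : L)‖ ^ 2)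
        - 4 * (∑ σ : L →+* ℂ, (σ (b : L)).re) + (Module.finrank ℚ L : ℝ) := by
    rw [Finset.sum_congr rfl fun σ _ => habs σ, Finset.sum_add_distrib, Finset.sum_sub_distrib,
      ← Finset.mul_sum, ← Finset.mul_sum, Finset.sum_const, Finset.card_univ,
      Embeddings.card L ℂ, nsmul_eq_mul, mul_one]
  rw [hsum] at hk
  linarith

/-- Lemma 5.14 (the condition P(L/ℚ, Dₙ) at the vertices of the Voronoi cell of Dₙ):
for algebraic integers `β₁, …, βₙ` whose sum lies in `2𝓞_L`:
(i) `Σ_σ Σ_k Re σ(β_k) ≤ Σ_σ Σ_k |σ(β_k)|²`;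
(ii) `Σ_σ (|σ(β₁) − 1|² + Σ_{k≥2} |σ(β_k)|²) ≥ [L:ℚ]`. -/
theorem statement5 (L : Type*) [Field L] [NumberField L] (n : ℕ) (hn : 1 ≤ n)
    (β : Fin n → 𝓞 L) (hsum : ∃ γ : 𝓞 L, ∑ k, β k = 2 * γ) :
    ((∑ σ : L →+* ℂ, ∑ k, (σ (β k : L)).re) ≤
        ∑ σ : L →+* ℂ, ∑ k, ‖σ (β k : L)‖ ^ 2) ∧
      ((Module.finrank ℚ L : ℝ) ≤
        ∑ σ : L →+* ℂ,
          (‖σ (β ⟨0, hn⟩ : L) - 1‖ ^ 2 +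
            ∑ k ∈ Finset.univ.filter (fun k : Fin n => k ≠ ⟨0, hn⟩),
              ‖σ (β k : L)‖ ^ 2)) := by
  constructor
  · calc ∑ σ : L →+* ℂ, ∑ k, (σ (β k : L)).re
        = ∑ k, ∑ σ : L →+* ℂ, (σ (β k : L)).re := Finset.sum_comm
    _ ≤ ∑ k, ∑ σ : L →+* ℂ, ‖σ (β k : L)‖ ^ 2 :=
        Finset.sum_le_sum fun k _ => keyB (β k)
    _ = ∑ σ : L →+* ℂ, ∑ k, ‖σ (β k : L)‖ ^ 2 := Finset.sum_comm
  · by_cases hc : ∀ k, k ≠ (⟨0, hn⟩ : Fin n) → β k = 0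
    · obtain ⟨γ, hγ⟩ := hsum
      have hβ0 : β ⟨0, hn⟩ = 2 * γ := by
        rw [← hγ]
        exact (Finset.sum_eq_single_of_mem _ (Finset.mem_univ _) fun b _ hb => hc b hb).symm
      have hne : (β ⟨0, hn⟩ - 1 : 𝓞 L) ≠ 0 := by
        rw [hβ0]
        exact fun h => two_mul_ne_one γ (by rwa [sub_eq_zero] at h)
      refine le_trans (keyA _ hne) (Finset.sum_le_sum fun σ _ => ?_)
      have hco : ((β ⟨0, hn⟩ - 1 : 𝓞 L) : L) = (β ⟨0, hn⟩ : L) - 1 := by push_cast; ring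
      rw [hco, map_sub, map_one]
      have h0 : (0:ℝ) ≤ ∑ k ∈ Finset.univ.filter (fun k : Fin n => k ≠ ⟨0, hn⟩),
          ‖σ (β k : L)‖ ^ 2 := Finset.sum_nonneg fun _ _ => by positivity
      linarith
    · push_neg at hc
      obtain ⟨k₀, hk₀ne, hk₀⟩ := hc
      refine le_trans (keyA _ hk₀) (Finset.sum_le_sum fun σ _ => ?_)
      have hmem : k₀ ∈ Finset.univ.filter (fun k : Fin n => k ≠ ⟨0, hn⟩) :=
        Finset.mem_filter.mpr ⟨Finset.mem_univ _, hk₀ne⟩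
      have h1 : ‖σ (β k₀ : L)‖ ^ 2
          ≤ ∑ k ∈ Finset.univ.filter (fun k : Fin n => k ≠ ⟨0, hn⟩),
              ‖σ (β k : L)‖ ^ 2 :=
        Finset.single_le_sum (f := fun k => ‖σ (β k : L)‖ ^ 2)
          (fun _ _ => by positivity) hmem
      have h2 : (0:ℝ) ≤ ‖σ (β ⟨0, hn⟩ : L) - 1‖ ^ 2 := by positivity
      linarith
end

section
/- Let L be a number field and let β₁, …, β₈ ∈ L satisfy: 2β_k ∈ O_L for all k, β_k − β_ℓ ∈ O_L for all k, ℓ (i.e. all β_k have the same class in (½O_L)/O_L), and β₁ + ⋯ + β₈ ∈ 2O_L. Then Σ_σ ( Σ_{k=1}^7 |σ(β_k)|² + |σ(β₈) − 1|² ) ≥ [L:ℚ] and Σ_σ ( Σ_{k=1}^7 |σ(β_k) − 1/3|² + |σ(β₈) + 1/3|² ) ≥ (8/9)·[L:ℚ], where σ ranges over all field embeddings of L into ℂ. -/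
open NumberField Finset

section helpers
variable {L : Type*} [Field L] [NumberField L]

private lemma sum_filter_ne7 {M : Type*} [AddCommMonoid M] (h : Fin 8 → M) :
    ∑ k ∈ Finset.univ.filter (fun k : Fin 8 => k ≠ 7), h k
      = h 0 + h 1 + h 2 + h 3 + h 4 + h 5 + h 6 := by
  rw [Finset.sum_filter, Fin.sum_univ_eight,
    if_pos (by decide : (0:Fin 8) ≠ 7), if_pos (by decide : (1:Fin 8) ≠ 7),
    if_pos (by decide : (2:Fin 8) ≠ 7), if_pos (by decide : (3:Fin 8) ≠ 7),
    if_pos (by decide : (4:Fin 8) ≠ 7), if_pos (by decide : (5:Fin 8) ≠ 7),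
    if_pos (by decide : (6:Fin 8) ≠ 7), if_neg (by decide : ¬ ((7:Fin 8) ≠ 7))]
  rw [add_zero]

private lemma iden (c : Fin 8 → ℂ) :
    (∑ k ∈ Finset.univ.filter (fun k : Fin 8 => k ≠ 7), ‖c k‖ ^ 2)
      + ‖c 7‖ ^ 2
    = (1/8) * ‖∑ k, c k‖ ^ 2
      + (1/56) * ‖∑ k ∈ Finset.univ.filter (fun k : Fin 8 => k ≠ 7), (c k - c 7)‖ ^ 2
      + (1/14) * ∑ k ∈ Finset.univ.filter (fun k : Fin 8 => k ≠ 7),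
          ∑ l ∈ Finset.univ.filter (fun l : Fin 8 => l ≠ 7), ‖c k - c l‖ ^ 2 := by
  simp only [sum_filter_ne7, Fin.sum_univ_eight, Complex.sq_norm, Complex.normSq_apply,
    Complex.add_re, Complex.add_im, Complex.sub_re, Complex.sub_im]
  ring

end helpers

section helpers2
variable {L : Type*} [Field L] [NumberField L]

private lemma base (w : L) (hw : IsIntegral ℤ w) (h0 : w ≠ 0) :
    (Module.finrank ℚ L : ℝ) ≤ ∑ σ : L →+* ℂ, ‖σ w‖ ^ 2 := by
  classical
  have hcard : Fintype.card (L →+* ℂ) = Module.finrank ℚ L := NumberField.Embeddings.card L ℂ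
  have hn0 : 0 < Module.finrank ℚ L := Module.finrank_pos
  -- the product of |σ w| equals |Norm(w)| ≥ 1
  have hprodeq : ∏ σ : L →+* ℂ, ‖σ w‖ = |(Algebra.norm ℚ w : ℝ)| := by
    have h1 : algebraMap ℚ ℂ (Algebra.norm ℚ w) = ∏ φ : L →ₐ[ℚ] ℂ, φ w :=
      Algebra.norm_eq_prod_embeddings ℚ ℂ w
    have h2 : ‖algebraMap ℚ ℂ (Algebra.norm ℚ w)‖
        = ∏ φ : L →ₐ[ℚ] ℂ, ‖φ w‖ := by rw [h1, norm_prod]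
    have h3 : ∏ σ : L →+* ℂ, ‖σ w‖ = ∏ φ : L →ₐ[ℚ] ℂ, ‖φ w‖ :=
      Fintype.prod_equiv (RingHom.equivRatAlgHom L ℂ) _ _
        (fun σ => by simp [RingHom.equivRatAlgHom_apply])
    rw [h3, ← h2, eq_ratCast, ← Complex.ofReal_ratCast, Complex.norm_real, Real.norm_eq_abs]
  have hNint : IsIntegral ℤ (Algebra.norm ℚ w) := Algebra.isIntegral_norm ℚ hw
  obtain ⟨z, hz⟩ := IsIntegrallyClosed.isIntegral_iff.mp hNint
  have hNne : Algebra.norm ℚ w ≠ 0 := by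
    rw [Algebra.norm_ne_zero_iff]; exact h0
  have hzne : z ≠ 0 := by
    rintro rfl; rw [map_zero] at hz; exact hNne hz.symm
  have hp1 : (1:ℝ) ≤ ∏ σ : L →+* ℂ, ‖σ w‖ := by
    rw [hprodeq, ← hz]
    have h1z : (1:ℤ) ≤ |z| := Int.one_le_abs hzne
    have h4 : |((algebraMap ℤ ℚ z : ℚ) : ℝ)| = |(z:ℝ)| := by
      rw [eq_intCast (algebraMap ℤ ℚ) z]; push_cast; ring_nf
    rw [h4]
    have : ((1:ℤ):ℝ) ≤ ((|z|:ℤ):ℝ) := by exact_mod_cast h1z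
    push_cast at this
    calc (1:ℝ) = |(1:ℝ)| := by norm_num
    _ ≤ |(z:ℝ)| := by rw [abs_one]; linarith [this]
  -- AM-GM
  set p : (L →+* ℂ) → ℝ := fun σ => ‖σ w‖ ^ 2 with hp
  have hpnn : ∀ σ : L →+* ℂ, 0 ≤ p σ := fun σ => by positivity
  set n := Module.finrank ℚ L with hn
  have hwsum : ∑ _σ : L →+* ℂ, (n:ℝ)⁻¹ = 1 := by
    rw [Finset.sum_const, Finset.card_univ, hcard, nsmul_eq_mul]
    field_simp
  have hge := Real.geom_mean_le_arith_mean_weighted Finset.univ (fun _ => (n:ℝ)⁻¹) p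
    (fun _ _ => by positivity) hwsum (fun σ _ => hpnn σ)
  have hlhs : (1:ℝ) ≤ ∏ σ : L →+* ℂ, p σ ^ ((n:ℝ)⁻¹) := by
    have hprodp : (1:ℝ) ≤ ∏ σ : L →+* ℂ, p σ := by
      have : ∏ σ : L →+* ℂ, p σ = (∏ σ : L →+* ℂ, ‖σ w‖) ^ 2 := by
        rw [← Finset.prod_pow]
      rw [this]; nlinarith
    calc (1:ℝ) = 1 ^ ((n:ℝ)⁻¹) := (Real.one_rpow _).symm
    _ ≤ (∏ σ : L →+* ℂ, p σ) ^ ((n:ℝ)⁻¹) :=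
        Real.rpow_le_rpow zero_le_one hprodp (by positivity)
    _ = ∏ σ : L →+* ℂ, p σ ^ ((n:ℝ)⁻¹) := by
        rw [← Real.finset_prod_rpow _ _ (fun σ _ => hpnn σ)]
  have : (1:ℝ) ≤ ∑ σ : L →+* ℂ, (n:ℝ)⁻¹ * p σ := le_trans hlhs hge
  rw [← Finset.mul_sum] at this
  have hnpos : (0:ℝ) < (n:ℝ) := by exact_mod_cast hn0
  calc (n:ℝ) = (n:ℝ) * 1 := by ring
  _ ≤ (n:ℝ) * ((n:ℝ)⁻¹ * ∑ σ : L →+* ℂ, p σ) := by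
      apply mul_le_mul_of_nonneg_left this (le_of_lt hnpos)
  _ = ∑ σ : L →+* ℂ, p σ := by field_simp

private lemma scaled_bound (w : L) (hw : IsIntegral ℤ w) (h0 : w ≠ 0) (m : ℝ) (x : L)
    (hx : ∀ σ : L →+* ℂ, σ x = (m:ℂ) * σ w) :
    m^2 * (Module.finrank ℚ L : ℝ) ≤ ∑ σ : L →+* ℂ, ‖σ x‖ ^ 2 := by
  have hb := base w hw h0
  have heq : ∀ σ : L →+* ℂ, ‖σ x‖^2 = m^2 * ‖σ w‖^2 := by
    intro σ
    rw [hx σ, norm_mul, Complex.norm_real, Real.norm_eq_abs, mul_pow, sq_abs]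
  rw [Finset.sum_congr rfl (fun σ _ => heq σ), ← Finset.mul_sum]
  exact mul_le_mul_of_nonneg_left hb (sq_nonneg m)

private lemma ratNotInt (q : ℚ) (hq : ∀ z : ℤ, (z:ℚ) ≠ q) :
    ¬ IsIntegral ℤ (algebraMap ℚ L q) := by
  intro h
  rw [isIntegral_algebraMap_iff (algebraMap ℚ L).injective] at h
  obtain ⟨z, hz⟩ := IsIntegrallyClosed.isIntegral_iff.mp h
  exact hq z (by exact_mod_cast hz)

end helpers2

section helpers3
variable {L : Type*} [Field L] [NumberField L]

private lemma pair_bound (g : Fin 8 → L) (F : Fin 8 → Fin 8 → ℝ)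
    (hF0 : ∀ k l, 0 ≤ F k l) (B : ℝ)
    (hFB : ∀ k l, k ≠ 7 → l ≠ 7 → g k ≠ g l → B ≤ F k l)
    (i : Fin 8) (hi : i ≠ 7) (hne : g i ≠ g 0) :
    12 * B ≤ ∑ k ∈ Finset.univ.filter (fun k : Fin 8 => k ≠ 7),
        ∑ l ∈ Finset.univ.filter (fun l : Fin 8 => l ≠ 7), F k l := by
  classical
  set S : Finset (Fin 8) := Finset.univ.filter (fun k : Fin 8 => k ≠ 7) with hS
  have hmemS : ∀ k : Fin 8, k ∈ S ↔ k ≠ 7 := by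
    intro k; simp [hS]
  have hi0 : i ≠ 0 := fun h => hne (h ▸ rfl)
  set c : Fin 8 → Fin 8 := fun k => if g k = g 0 then i else 0 with hc
  have hcS : ∀ k, c k ≠ 7 := by
    intro k; by_cases h : g k = g 0 <;> simp [hc, h, hi] <;> decide
  have hgc : ∀ k, g k ≠ g (c k) := by
    intro k; by_cases h : g k = g 0
    · simpa [hc, h] using (h ▸ (fun hh => hne hh.symm) : g k ≠ g i)
    · simpa [hc, h] using h
  set P1 : Finset (Fin 8 × Fin 8) := (S.erase 0).image (fun k => (k, c k)) with hP1
  set P2 : Finset (Fin 8 × Fin 8) := (S.erase 0).image (fun k => (c k, k)) with hP2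
  have hinj1 : Set.InjOn (fun k : Fin 8 => (k, c k)) (S.erase 0) :=
    fun a _ b _ h => (Prod.mk.injEq _ _ _ _).mp h |>.1
  have hinj2 : Set.InjOn (fun k : Fin 8 => (c k, k)) (S.erase 0) :=
    fun a _ b _ h => (Prod.mk.injEq _ _ _ _).mp h |>.2
  have hdisj : Disjoint P1 P2 := by
    rw [Finset.disjoint_left]
    rintro ⟨x, y⟩ hp1 hp2
    rw [hP1, Finset.mem_image] at hp1
    rw [hP2, Finset.mem_image] at hp2
    obtain ⟨k, hk, hk2⟩ := hp1
    obtain ⟨l, hl, hl2⟩ := hp2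
    have hkx : k = x := congrArg Prod.fst hk2
    have hcky : c k = y := congrArg Prod.snd hk2
    have hclx : c l = x := congrArg Prod.fst hl2
    have hly : l = y := congrArg Prod.snd hl2
    have hkne0 : k ≠ 0 := Finset.ne_of_mem_erase hk
    have hlne0 : l ≠ 0 := Finset.ne_of_mem_erase hl
    -- k = c l ∈ {0, i}; k ≠ 0 so k = i and g l = g 0
    have hkcl : k = c l := hkx.trans hclx.symm
    by_cases hgl : g l = g 0
    · have hki : k = i := by rw [hkcl, hc]; simp [hgl]
      -- then l = c k = c i = 0 since g i ≠ g 0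
      have : c k = 0 := by rw [hki, hc]; simp [hne]
      exact hlne0 (hly.symm ▸ (hcky ▸ this : y = 0))
    · have : k = 0 := by rw [hkcl, hc]; simp [hgl]
      exact hkne0 this
  have hcard1 : P1.card = 6 := by
    rw [hP1, Finset.card_image_of_injOn hinj1, Finset.card_erase_of_mem]
    · rw [hS]; decide
    · rw [hS]; decide
  have hcard2 : P2.card = 6 := by
    rw [hP2, Finset.card_image_of_injOn hinj2, Finset.card_erase_of_mem]
    · rw [hS]; decide
    · rw [hS]; decide
  have hsub : P1 ∪ P2 ⊆ S ×ˢ S := by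
    intro p hp
    rw [Finset.mem_union] at hp
    rcases hp with hp | hp
    · rw [hP1, Finset.mem_image] at hp
      obtain ⟨k, hk, rfl⟩ := hp
      rw [Finset.mem_product]
      exact ⟨Finset.mem_of_mem_erase hk, (hmemS _).mpr (hcS k)⟩
    · rw [hP2, Finset.mem_image] at hp
      obtain ⟨k, hk, rfl⟩ := hp
      rw [Finset.mem_product]
      exact ⟨(hmemS _).mpr (hcS k), Finset.mem_of_mem_erase hk⟩
  have hBlow : ∀ p ∈ P1 ∪ P2, B ≤ F p.1 p.2 := by
    intro p hp
    rw [Finset.mem_union] at hp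
    rcases hp with hp | hp
    · rw [hP1, Finset.mem_image] at hp
      obtain ⟨k, hk, rfl⟩ := hp
      exact hFB _ _ ((hmemS _).mp (Finset.mem_of_mem_erase hk)) (hcS k) (hgc k)
    · rw [hP2, Finset.mem_image] at hp
      obtain ⟨k, hk, rfl⟩ := hp
      exact hFB _ _ (hcS k) ((hmemS _).mp (Finset.mem_of_mem_erase hk)) (Ne.symm (hgc k))
  calc 12 * B = ((P1 ∪ P2).card : ℝ) * B := by
        rw [Finset.card_union_of_disjoint hdisj, hcard1, hcard2]; norm_num
  _ = ∑ _p ∈ P1 ∪ P2, B := by rw [Finset.sum_const, nsmul_eq_mul]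
  _ ≤ ∑ p ∈ P1 ∪ P2, F p.1 p.2 := Finset.sum_le_sum hBlow
  _ ≤ ∑ p ∈ S ×ˢ S, F p.1 p.2 :=
        Finset.sum_le_sum_of_subset_of_nonneg hsub (fun p _ _ => hF0 p.1 p.2)
  _ = ∑ k ∈ S, ∑ l ∈ S, F k l := by rw [Finset.sum_product]

end helpers3

section helpers4
variable {L : Type*} [Field L] [NumberField L]

private lemma master (t : Fin 8 → L) :
    ∑ σ : L →+* ℂ, ((∑ k ∈ Finset.univ.filter (fun k : Fin 8 => k ≠ 7),
        ‖σ (t k)‖ ^ 2) + ‖σ (t 7)‖ ^ 2)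
      = (1/8) * ∑ σ : L →+* ℂ, ‖σ (∑ k, t k)‖ ^ 2
        + (1/56) * ∑ σ : L →+* ℂ,
            ‖σ (∑ k ∈ Finset.univ.filter (fun k : Fin 8 => k ≠ 7), (t k - t 7))‖ ^ 2
        + (1/14) * ∑ k ∈ Finset.univ.filter (fun k : Fin 8 => k ≠ 7),
            ∑ l ∈ Finset.univ.filter (fun l : Fin 8 => l ≠ 7),
              ∑ σ : L →+* ℂ, ‖σ (t k - t l)‖ ^ 2 := by
  have hσ : ∀ σ : L →+* ℂ,
      ((∑ k ∈ Finset.univ.filter (fun k : Fin 8 => k ≠ 7), ‖σ (t k)‖ ^ 2)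
        + ‖σ (t 7)‖ ^ 2)
      = (1/8) * ‖σ (∑ k, t k)‖ ^ 2
        + (1/56) * ‖σ (∑ k ∈ Finset.univ.filter (fun k : Fin 8 => k ≠ 7), (t k - t 7))‖ ^ 2
        + (1/14) * ∑ k ∈ Finset.univ.filter (fun k : Fin 8 => k ≠ 7),
            ∑ l ∈ Finset.univ.filter (fun l : Fin 8 => l ≠ 7),
              ‖σ (t k - t l)‖ ^ 2 := by
    intro σ
    have := iden (fun k => σ (t k))
    simp only [map_sum, map_sub] at this ⊢
    exact this
  rw [Finset.sum_congr rfl (fun σ _ => hσ σ), Finset.sum_add_distrib, Finset.sum_add_distrib,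
    ← Finset.mul_sum, ← Finset.mul_sum, ← Finset.mul_sum]
  congr 1
  rw [Finset.sum_comm]
  congr 1
  apply Finset.sum_congr rfl
  intro k _
  rw [Finset.sum_comm]

end helpers4


set_option maxHeartbeats 1000000 in
/-- Lemma 5.15 (the condition P(L/ℚ, E₈) at the vertices of the Voronoi cell of E₈):
for `β₁, …, β₈ ∈ ½𝓞_L`, all with the same class in `(½𝓞_L)/𝓞_L`, whose sum lies in `2𝓞_L`:
`Σ_σ (Σ_{k=1}^7 |σ(β_k)|² + |σ(β₈) − 1|²) ≥ [L:ℚ]` and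
`Σ_σ (Σ_{k=1}^7 |σ(β_k) − 1/3|² + |σ(β₈) + 1/3|²) ≥ (8/9)[L:ℚ]`. -/
theorem statement6 (L : Type*) [Field L] [NumberField L] (β : Fin 8 → L)
    (h2 : ∀ k, IsIntegral ℤ (2 * β k))
    (hdiff : ∀ k l, IsIntegral ℤ (β k - β l))
    (hsum : ∃ γ : L, IsIntegral ℤ γ ∧ ∑ k, β k = 2 * γ) :
    ((Module.finrank ℚ L : ℝ) ≤
        ∑ σ : L →+* ℂ,
          ((∑ k ∈ Finset.univ.filter (fun k : Fin 8 => k ≠ 7),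
              ‖σ (β k)‖ ^ 2) +
            ‖σ (β 7) - 1‖ ^ 2)) ∧
      ((8 / 9 : ℝ) * (Module.finrank ℚ L : ℝ) ≤
        ∑ σ : L →+* ℂ,
          ((∑ k ∈ Finset.univ.filter (fun k : Fin 8 => k ≠ 7),
              ‖σ (β k) - 1 / 3‖ ^ 2) +
            ‖σ (β 7) + 1 / 3‖ ^ 2)) := by
  obtain ⟨γ, hγint, hγsum⟩ := hsum
  have hsum8 : β 0 + β 1 + β 2 + β 3 + β 4 + β 5 + β 6 + β 7 = 2*γ := by
    rw [Fin.sum_univ_eight] at hγsum; exact hγsum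
  have hcast : ∀ z : ℤ, IsIntegral ℤ ((z : L)) := fun z => by
    simpa using isIntegral_algebraMap (R := ℤ) (A := L) (x := z)
  have h2ne : (2:L) ≠ 0 := by norm_num
  have huint : IsIntegral ℤ (2*β 7) := h2 7
  constructor
  · -- first inequality
    set t : Fin 8 → L := fun k => if k = 7 then 2*β 7 - 2 else 2*β k with ht
    have ht7 : t 7 = 2*β 7 - 2 := by simp [ht]
    have htk : ∀ k : Fin 8, k ≠ 7 → t k = 2*β k := by intro k hk; simp [ht, hk]
    have hE1 : (∑ k, t k) = 2 * (2*γ - 1) := by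
      rw [Fin.sum_univ_eight, htk 0 (by decide), htk 1 (by decide), htk 2 (by decide),
        htk 3 (by decide), htk 4 (by decide), htk 5 (by decide), htk 6 (by decide), ht7]
      linear_combination 2 * hsum8
    have hE2 : (∑ k ∈ Finset.univ.filter (fun k : Fin 8 => k ≠ 7), (t k - t 7))
        = 2 * (2*γ - 4*(2*β 7) + 7) := by
      rw [sum_filter_ne7, htk 0 (by decide), htk 1 (by decide), htk 2 (by decide),
        htk 3 (by decide), htk 4 (by decide), htk 5 (by decide), htk 6 (by decide), ht7]
      linear_combination 2 * hsum8
    have hsint : IsIntegral ℤ (2*γ - 1) := by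
      have h : (2*γ - 1 : L) = γ + γ - 1 := by ring
      rw [h]; exact (hγint.add hγint).sub isIntegral_one
    have haaint : IsIntegral ℤ (2*γ - 4*(2*β 7) + 7) := by
      have h : (2*γ - 4*(2*β 7) + 7 : L)
          = γ + γ - ((2*β 7) + (2*β 7) + (2*β 7) + (2*β 7)) + ((7:ℤ):L) := by push_cast; ring
      rw [h]
      exact ((hγint.add hγint).sub (((huint.add huint).add huint).add huint)).add (hcast 7)
    have hsne : (2*γ - 1 : L) ≠ 0 := by
      intro h
      have hγeq : γ = algebraMap ℚ L (1/2) := by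
        rw [map_div₀, map_one, map_ofNat, eq_div_iff h2ne]
        linear_combination h
      exact ratNotInt (1/2) (fun z hz => by
        have h2' : (2*z : ℚ) = 1 := by linear_combination 2*hz
        have h3 : (2*z : ℤ) = 1 := by exact_mod_cast h2'
        omega) (hγeq ▸ hγint)
    have haane : (2*γ - 4*(2*β 7) + 7 : L) ≠ 0 := by
      intro h
      have hxint : IsIntegral ℤ ((2*β 7) + (2*β 7) - γ) := (huint.add huint).sub hγint
      have hxeq : (2*β 7) + (2*β 7) - γ = algebraMap ℚ L (7/2) := by
        rw [map_div₀, map_ofNat, map_ofNat, eq_div_iff h2ne]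
        linear_combination -h
      exact ratNotInt (7/2) (fun z hz => by
        have h2' : (2*z : ℚ) = 7 := by linear_combination 2*hz
        have h3 : (2*z : ℤ) = 7 := by exact_mod_cast h2'
        omega) (hxeq ▸ hxint)
    have hM := master t
    have hG : ∑ σ : L →+* ℂ, ((∑ k ∈ Finset.univ.filter (fun k : Fin 8 => k ≠ 7),
          ‖σ (t k)‖ ^ 2) + ‖σ (t 7)‖ ^ 2)
        = 4 * ∑ σ : L →+* ℂ, ((∑ k ∈ Finset.univ.filter (fun k : Fin 8 => k ≠ 7),
            ‖σ (β k)‖ ^ 2) + ‖σ (β 7) - 1‖ ^ 2) := by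
      rw [Finset.mul_sum]
      apply Finset.sum_congr rfl; intro σ _
      rw [mul_add, Finset.mul_sum]
      congr 1
      · apply Finset.sum_congr rfl; intro k hk
        have hk7 : k ≠ 7 := by simpa using hk
        rw [htk k hk7, map_mul, map_ofNat, norm_mul, Complex.norm_ofNat]
        ring
      · have h : (σ (t 7) : ℂ) = 2*(σ (β 7) - 1) := by
          rw [ht7, map_sub, map_mul, map_ofNat]; ring
        rw [h, norm_mul, Complex.norm_ofNat]
        ring
    have hTs : 4 * (Module.finrank ℚ L : ℝ)
        ≤ ∑ σ : L →+* ℂ, ‖σ (∑ k, t k)‖ ^ 2 := by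
      have h := scaled_bound (2*γ - 1) hsint hsne 2 (∑ k, t k) (fun σ => by
        rw [hE1, map_mul, map_ofNat]; norm_num)
      calc (4:ℝ) * (Module.finrank ℚ L : ℝ) = (2:ℝ)^2 * (Module.finrank ℚ L : ℝ) := by norm_num
      _ ≤ _ := h
    have hTpnn : (0:ℝ) ≤ ∑ k ∈ Finset.univ.filter (fun k : Fin 8 => k ≠ 7),
        ∑ l ∈ Finset.univ.filter (fun l : Fin 8 => l ≠ 7),
          ∑ σ : L →+* ℂ, ‖σ (t k - t l)‖ ^ 2 :=
      Finset.sum_nonneg (fun k _ => Finset.sum_nonneg (fun l _ =>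
        Finset.sum_nonneg (fun σ _ => by positivity)))
    rcases Classical.em (∀ k : Fin 8, k ≠ 7 → β k = β 0) with hall | hall
    · -- all βₖ (k ≤ 6) equal
      have hE2A : (∑ k ∈ Finset.univ.filter (fun k : Fin 8 => k ≠ 7), (t k - t 7))
          = 14*((β 0 - β 7) + 1) := by
        rw [sum_filter_ne7, htk 0 (by decide), htk 1 (by decide), htk 2 (by decide),
          htk 3 (by decide), htk 4 (by decide), htk 5 (by decide), htk 6 (by decide), ht7,
          hall 1 (by decide), hall 2 (by decide), hall 3 (by decide), hall 4 (by decide),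
          hall 5 (by decide), hall 6 (by decide)]
        ring
      have haaeq : (2*γ - 4*(2*β 7) + 7 : L) = 7*((β 0 - β 7) + 1) := by
        apply mul_left_cancel₀ h2ne
        rw [← hE2, hE2A]; ring
      have hd1ne : ((β 0 - β 7) + 1 : L) ≠ 0 := by
        intro h; apply haane; rw [haaeq, h, mul_zero]
      have hTa : 196 * (Module.finrank ℚ L : ℝ)
          ≤ ∑ σ : L →+* ℂ, ‖σ (∑ k ∈ Finset.univ.filter
              (fun k : Fin 8 => k ≠ 7), (t k - t 7))‖ ^ 2 := by
        have h := scaled_bound ((β 0 - β 7) + 1) ((hdiff 0 7).add isIntegral_one) hd1ne 14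
          (∑ k ∈ Finset.univ.filter (fun k : Fin 8 => k ≠ 7), (t k - t 7))
          (fun σ => by rw [hE2A, map_mul, map_ofNat]; norm_num)
        calc (196:ℝ) * (Module.finrank ℚ L : ℝ) = (14:ℝ)^2 * (Module.finrank ℚ L : ℝ) := by norm_num
        _ ≤ _ := h
      linarith [hM, hG, hTs, hTa, hTpnn]
    · push_neg at hall
      obtain ⟨i, hi7, hine⟩ := hall
      have hTa : 4 * (Module.finrank ℚ L : ℝ)
          ≤ ∑ σ : L →+* ℂ, ‖σ (∑ k ∈ Finset.univ.filter
              (fun k : Fin 8 => k ≠ 7), (t k - t 7))‖ ^ 2 := by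
        have h := scaled_bound _ haaint haane 2
          (∑ k ∈ Finset.univ.filter (fun k : Fin 8 => k ≠ 7), (t k - t 7))
          (fun σ => by rw [hE2, map_mul, map_ofNat]; norm_num)
        calc (4:ℝ) * (Module.finrank ℚ L : ℝ) = (2:ℝ)^2 * (Module.finrank ℚ L : ℝ) := by norm_num
        _ ≤ _ := h
      have hTp : 12 * ((2:ℝ)^2 * (Module.finrank ℚ L : ℝ))
          ≤ ∑ k ∈ Finset.univ.filter (fun k : Fin 8 => k ≠ 7),
              ∑ l ∈ Finset.univ.filter (fun l : Fin 8 => l ≠ 7),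
                ∑ σ : L →+* ℂ, ‖σ (t k - t l)‖ ^ 2 := by
        apply pair_bound β (fun k l => ∑ σ : L →+* ℂ, ‖σ (t k - t l)‖ ^ 2)
          (fun k l => by positivity) _ ?_ i hi7 hine
        intro k l hk hl hne
        show (2:ℝ)^2 * (Module.finrank ℚ L : ℝ)
          ≤ ∑ σ : L →+* ℂ, ‖σ (t k - t l)‖ ^ 2
        have hkl : t k - t l = 2*(β k - β l) := by rw [htk k hk, htk l hl]; ring
        rw [hkl]
        exact scaled_bound (β k - β l) (hdiff k l) (sub_ne_zero.mpr hne) 2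
          (2*(β k - β l)) (fun σ => by rw [map_mul, map_ofNat]; norm_num)
      linarith [hM, hG, hTs, hTa, hTp]
  · -- second inequality
    set t : Fin 8 → L := fun k => if k = 7 then 6*β 7 + 2 else 6*β k - 2 with ht
    have ht7 : t 7 = 6*β 7 + 2 := by simp [ht]
    have htk : ∀ k : Fin 8, k ≠ 7 → t k = 6*β k - 2 := by intro k hk; simp [ht, hk]
    have h3Lne : (3:L) ≠ 0 := by norm_num
    have hn0 : (0:ℝ) ≤ (Module.finrank ℚ L : ℝ) := by positivity
    have hE1 : (∑ k, t k) = 12 * (γ - 1) := by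
      rw [Fin.sum_univ_eight, htk 0 (by decide), htk 1 (by decide), htk 2 (by decide),
        htk 3 (by decide), htk 4 (by decide), htk 5 (by decide), htk 6 (by decide), ht7]
      linear_combination 6 * hsum8
    have hE2 : (∑ k ∈ Finset.univ.filter (fun k : Fin 8 => k ≠ 7), (t k - t 7))
        = 12*γ - 24*(2*β 7) - 28 := by
      rw [sum_filter_ne7, htk 0 (by decide), htk 1 (by decide), htk 2 (by decide),
        htk 3 (by decide), htk 4 (by decide), htk 5 (by decide), htk 6 (by decide), ht7]
      linear_combination 6 * hsum8
    have hM := master t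
    have hG : ∑ σ : L →+* ℂ, ((∑ k ∈ Finset.univ.filter (fun k : Fin 8 => k ≠ 7),
          ‖σ (t k)‖ ^ 2) + ‖σ (t 7)‖ ^ 2)
        = 36 * ∑ σ : L →+* ℂ, ((∑ k ∈ Finset.univ.filter (fun k : Fin 8 => k ≠ 7),
            ‖σ (β k) - 1/3‖ ^ 2) + ‖σ (β 7) + 1/3‖ ^ 2) := by
      rw [Finset.mul_sum]
      apply Finset.sum_congr rfl; intro σ _
      rw [mul_add, Finset.mul_sum]
      congr 1
      · apply Finset.sum_congr rfl; intro k hk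
        have hk7 : k ≠ 7 := by simpa using hk
        have h : (σ (t k) : ℂ) = 6*(σ (β k) - 1/3) := by
          rw [htk k hk7, map_sub, map_mul]; simp only [map_ofNat]; ring
        rw [h, norm_mul, Complex.norm_ofNat]
        ring
      · have h : (σ (t 7) : ℂ) = 6*(σ (β 7) + 1/3) := by
          rw [ht7, map_add, map_mul, map_ofNat, map_ofNat]; ring
        rw [h, norm_mul, Complex.norm_ofNat]
        ring
    have hTsnn : (0:ℝ) ≤ ∑ σ : L →+* ℂ, ‖σ (∑ k, t k)‖ ^ 2 :=
      Finset.sum_nonneg (fun σ _ => by positivity)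
    have hTann : (0:ℝ) ≤ ∑ σ : L →+* ℂ, ‖σ (∑ k ∈ Finset.univ.filter
        (fun k : Fin 8 => k ≠ 7), (t k - t 7))‖ ^ 2 :=
      Finset.sum_nonneg (fun σ _ => by positivity)
    have hTpnn : (0:ℝ) ≤ ∑ k ∈ Finset.univ.filter (fun k : Fin 8 => k ≠ 7),
        ∑ l ∈ Finset.univ.filter (fun l : Fin 8 => l ≠ 7),
          ∑ σ : L →+* ℂ, ‖σ (t k - t l)‖ ^ 2 :=
      Finset.sum_nonneg (fun k _ => Finset.sum_nonneg (fun l _ =>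
        Finset.sum_nonneg (fun σ _ => by positivity)))
    rcases Classical.em (∀ k : Fin 8, k ≠ 7 → β k = β 0) with hall | hall
    · -- all βₖ (k ≤ 6) equal
      have hE2A : (∑ k ∈ Finset.univ.filter (fun k : Fin 8 => k ≠ 7), (t k - t 7))
          = 14*(3*(β 0 - β 7) - 2) := by
        rw [sum_filter_ne7, htk 0 (by decide), htk 1 (by decide), htk 2 (by decide),
          htk 3 (by decide), htk 4 (by decide), htk 5 (by decide), htk 6 (by decide), ht7,
          hall 1 (by decide), hall 2 (by decide), hall 3 (by decide), hall 4 (by decide),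
          hall 5 (by decide), hall 6 (by decide)]
        ring
      have h7d : 7*(β 0 - β 7) = 2*γ - 4*(2*β 7) := by
        rw [hall 1 (by decide), hall 2 (by decide), hall 3 (by decide),
          hall 4 (by decide), hall 5 (by decide), hall 6 (by decide)] at hsum8
        linear_combination hsum8
      set e : L := γ - 2*(2*β 7) - 3*(β 0 - β 7) with he
      have hd2e : β 0 - β 7 = 2*e := by rw [he]; linear_combination h7d
      have heint : IsIntegral ℤ e := by
        have h : e = γ - ((2*β 7) + (2*β 7))
            - ((β 0 - β 7) + (β 0 - β 7) + (β 0 - β 7)) := by rw [he]; ring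
        rw [h]
        exact (hγint.sub (huint.add huint)).sub
          (((hdiff 0 7).add (hdiff 0 7)).add (hdiff 0 7))
      have h3eint : IsIntegral ℤ (3*e - 1) := by
        have h : (3*e - 1 : L) = e + e + e - 1 := by ring
        rw [h]; exact ((heint.add heint).add heint).sub isIntegral_one
      have h3ene : (3*e - 1 : L) ≠ 0 := by
        intro h
        have heeq : e = algebraMap ℚ L (1/3) := by
          rw [map_div₀, map_one, map_ofNat, eq_div_iff h3Lne]
          linear_combination h
        exact ratNotInt (1/3) (fun z hz => by
          have h2' : (3*z : ℚ) = 1 := by linear_combination 3*hz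
          have h3 : (3*z : ℤ) = 1 := by exact_mod_cast h2'
          omega) (heeq ▸ heint)
      have hA28 : (∑ k ∈ Finset.univ.filter (fun k : Fin 8 => k ≠ 7), (t k - t 7))
          = 28*(3*e - 1) := by
        rw [hE2A, hd2e]; ring
      rcases Classical.em (γ = (1:L)) with hγ1 | hγ1
      · -- γ = 1  :  e ≡ 1 mod 2
        have h7e2u : 7*e + 2*(2*β 7) = 1 := by
          apply mul_left_cancel₀ h2ne
          linear_combination h7d - 7*hd2e + 2*hγ1
        set f : L := -(2*β 7 + 3*e) with hf
        have hef : e = 1 + 2*f := by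
          rw [hf]; linear_combination h7e2u
        have hfint : IsIntegral ℤ f := by
          have h : f = -((2*β 7) + (e + e + e)) := by rw [hf]; ring
          rw [h]; exact (huint.add ((heint.add heint).add heint)).neg
        have h13fint : IsIntegral ℤ (1 + 3*f) := by
          have h : (1 + 3*f : L) = f + f + f + 1 := by ring
          rw [h]; exact ((hfint.add hfint).add hfint).add isIntegral_one
        have h13fne : (1 + 3*f : L) ≠ 0 := by
          intro h
          have hfeq : f = algebraMap ℚ L (-1/3) := by
            rw [map_div₀, map_neg, map_one, map_ofNat, eq_div_iff h3Lne]
            linear_combination h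
          exact ratNotInt (-1/3) (fun z hz => by
            have h2' : (3*z : ℚ) = -1 := by linear_combination 3*hz
            have h3 : (3*z : ℤ) = -1 := by exact_mod_cast h2'
            omega) (hfeq ▸ hfint)
        have hA56 : (∑ k ∈ Finset.univ.filter (fun k : Fin 8 => k ≠ 7), (t k - t 7))
            = 56*(1 + 3*f) := by
          rw [hA28]; linear_combination 84*hef
        have hTa : (56:ℝ)^2 * (Module.finrank ℚ L : ℝ)
            ≤ ∑ σ : L →+* ℂ, ‖σ (∑ k ∈ Finset.univ.filter
                (fun k : Fin 8 => k ≠ 7), (t k - t 7))‖ ^ 2 :=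
          scaled_bound (1 + 3*f) h13fint h13fne 56
            (∑ k ∈ Finset.univ.filter (fun k : Fin 8 => k ≠ 7), (t k - t 7))
            (fun σ => by rw [hA56, map_mul, map_ofNat]; norm_num)
        linarith [hM, hG, hTa, hTsnn, hTpnn, hn0]
      · -- γ ≠ 1
        have hγne : (γ - 1 : L) ≠ 0 := sub_ne_zero.mpr hγ1
        have hTs : (12:ℝ)^2 * (Module.finrank ℚ L : ℝ)
            ≤ ∑ σ : L →+* ℂ, ‖σ (∑ k, t k)‖ ^ 2 :=
          scaled_bound (γ - 1) (hγint.sub isIntegral_one) hγne 12 (∑ k, t k)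
            (fun σ => by rw [hE1, map_mul, map_ofNat]; norm_num)
        have hTa : (28:ℝ)^2 * (Module.finrank ℚ L : ℝ)
            ≤ ∑ σ : L →+* ℂ, ‖σ (∑ k ∈ Finset.univ.filter
                (fun k : Fin 8 => k ≠ 7), (t k - t 7))‖ ^ 2 :=
          scaled_bound (3*e - 1) h3eint h3ene 28
            (∑ k ∈ Finset.univ.filter (fun k : Fin 8 => k ≠ 7), (t k - t 7))
            (fun σ => by rw [hA28, map_mul, map_ofNat]; norm_num)
        linarith [hM, hG, hTs, hTa, hTpnn, hn0]
    · -- not all equal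
      push_neg at hall
      obtain ⟨i, hi7, hine⟩ := hall
      have hTp : 12 * ((6:ℝ)^2 * (Module.finrank ℚ L : ℝ))
          ≤ ∑ k ∈ Finset.univ.filter (fun k : Fin 8 => k ≠ 7),
              ∑ l ∈ Finset.univ.filter (fun l : Fin 8 => l ≠ 7),
                ∑ σ : L →+* ℂ, ‖σ (t k - t l)‖ ^ 2 := by
        apply pair_bound β (fun k l => ∑ σ : L →+* ℂ, ‖σ (t k - t l)‖ ^ 2)
          (fun k l => by positivity) _ ?_ i hi7 hine
        intro k l hk hl hne
        show (6:ℝ)^2 * (Module.finrank ℚ L : ℝ)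
          ≤ ∑ σ : L →+* ℂ, ‖σ (t k - t l)‖ ^ 2
        have hkl : t k - t l = 6*(β k - β l) := by rw [htk k hk, htk l hl]; ring
        rw [hkl]
        exact scaled_bound (β k - β l) (hdiff k l) (sub_ne_zero.mpr hne) 6
          (6*(β k - β l)) (fun σ => by rw [map_mul, map_ofNat]; norm_num)
      rcases Classical.em (γ = (1:L)) with hγ1 | hγ1
      · -- γ = 1
        have hA8 : (∑ k ∈ Finset.univ.filter (fun k : Fin 8 => k ≠ 7), (t k - t 7))
            = 8*(-(3*(2*β 7) + 2)) := by
          rw [hE2]; linear_combination 12*hγ1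
        have hyint : IsIntegral ℤ (-(3*(2*β 7) + 2) : L) := by
          have h : (-(3*(2*β 7) + 2) : L)
              = -((2*β 7) + (2*β 7) + (2*β 7) + (1 + 1)) := by ring
          rw [h]
          exact ((((huint.add huint).add huint).add
            (isIntegral_one.add isIntegral_one))).neg
        have hyne : (-(3*(2*β 7) + 2) : L) ≠ 0 := by
          rw [neg_ne_zero]
          intro h
          have hueq : 2*β 7 = algebraMap ℚ L (-2/3) := by
            rw [map_div₀, map_neg, map_ofNat, map_ofNat, eq_div_iff h3Lne]
            linear_combination h
          exact ratNotInt (-2/3) (fun z hz => by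
            have h2' : (3*z : ℚ) = -2 := by linear_combination 3*hz
            have h3 : (3*z : ℤ) = -2 := by exact_mod_cast h2'
            omega) (hueq ▸ huint)
        have hTa : (8:ℝ)^2 * (Module.finrank ℚ L : ℝ)
            ≤ ∑ σ : L →+* ℂ, ‖σ (∑ k ∈ Finset.univ.filter
                (fun k : Fin 8 => k ≠ 7), (t k - t 7))‖ ^ 2 :=
          scaled_bound (-(3*(2*β 7) + 2)) hyint hyne 8
            (∑ k ∈ Finset.univ.filter (fun k : Fin 8 => k ≠ 7), (t k - t 7))
            (fun σ => by rw [hA8, map_mul, map_ofNat]; norm_num)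
        linarith [hM, hG, hTa, hTp, hTsnn, hn0]
      · -- γ ≠ 1
        have hγne : (γ - 1 : L) ≠ 0 := sub_ne_zero.mpr hγ1
        have hTs : (12:ℝ)^2 * (Module.finrank ℚ L : ℝ)
            ≤ ∑ σ : L →+* ℂ, ‖σ (∑ k, t k)‖ ^ 2 :=
          scaled_bound (γ - 1) (hγint.sub isIntegral_one) hγne 12 (∑ k, t k)
            (fun σ => by rw [hE1, map_mul, map_ofNat]; norm_num)
        linarith [hM, hG, hTs, hTp, hTann, hn0]
end

section
/- Let a₀, a₁ be positive coprime integers and let b₀, b₁ be integers with a₀b₁ − a₁b₀ = 1. Then for every integer m one has |a₀b₀ + a₁b₁ − m(a₀² + a₁²)| ≥ √((a₀² + a₁²)/2). Equivalently, the distance from the rational number (a₀b₀ + a₁b₁)/(a₀² + a₁²) to the nearest integer is at least 1/(√2·√(a₀² + a₁²)). -/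
/-- Key estimate of Proposition 4.2: if `a₀, a₁` are positive coprime integers and
`a₀b₁ − a₁b₀ = 1`, then for every integer `m`,
`|a₀b₀ + a₁b₁ − m(a₀² + a₁²)| ≥ √((a₀² + a₁²)/2)`. -/
theorem statement8 (a₀ a₁ b₀ b₁ : ℤ) (ha₀ : 0 < a₀) (ha₁ : 0 < a₁)
    (hcop : IsCoprime a₀ a₁) (hdet : a₀ * b₁ - a₁ * b₀ = 1) (m : ℤ) :
    Real.sqrt (((a₀ ^ 2 + a₁ ^ 2 : ℤ) : ℝ) / 2) ≤
      |((a₀ * b₀ + a₁ * b₁ - m * (a₀ ^ 2 + a₁ ^ 2) : ℤ) : ℝ)| := by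
  set N : ℤ := a₀ ^ 2 + a₁ ^ 2 with hN
  set c : ℤ := a₀ * b₀ + a₁ * b₁ - m * N with hc
  set K : ℤ := (b₀ - m * a₀) ^ 2 + (b₁ - m * a₁) ^ 2 with hK
  have key : c ^ 2 + 1 = N * K := by
    have : c ^ 2 + (a₀ * b₁ - a₁ * b₀) ^ 2 = N * K := by
      simp only [hc, hN, hK]; ring
    rw [hdet] at this; linarith [this]
  have hNpos : 0 < N := by positivity
  have hN2 : 2 ≤ N := by nlinarith
  have hKpos : 0 < K := by nlinarith
  have hK1 : 1 ≤ K := hKpos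
  have h2 : N ≤ 2 * c ^ 2 := by nlinarith
  have hreal : ((N : ℝ)) / 2 ≤ ((c : ℝ)) ^ 2 := by
    have : (N : ℝ) ≤ 2 * (c : ℝ) ^ 2 := by exact_mod_cast h2
    linarith
  calc Real.sqrt ((N : ℝ) / 2) ≤ Real.sqrt ((c : ℝ) ^ 2) := Real.sqrt_le_sqrt hreal
    _ = |(c : ℝ)| := Real.sqrt_sq_eq_abs _
end

section
/- Let n₁ and n₂ be coprime positive integers and n = n₁n₂. Let ζ₁, ζ₂ ∈ ℂ be primitive n₁-th and n₂-th roots of unity, and let K₁ = ℚ(ζ₁), K₂ = ℚ(ζ₂) and K = ℚ(ζ₁ζ₂) = K₁K₂ (the n-th cyclotomic field). Then for all a, a′ ∈ K₁ and b, b′ ∈ K₂ one has Σ_{σ : K → ℂ} σ(ab)·conj(σ(a′b′)) = ( Σ_{σ₁ : K₁ → ℂ} σ₁(a)·conj(σ₁(a′)) ) · ( Σ_{σ₂ : K₂ → ℂ} σ₂(b)·conj(σ₂(b′)) ), where each sum ranges over all field embeddings into ℂ. -/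
open IntermediateField

lemma card_emb_cyclo (n : ℕ) (hn : 0 < n) (F : Type*) [Field F] [NumberField F]
    (ζ : F) (hζ : IsPrimitiveRoot ζ n)
    (hF : IntermediateField.adjoin ℚ ({ζ} : Set F) = ⊤) :
    Fintype.card (F →+* ℂ) = n.totient := by
  have hint : IsIntegral ℚ ζ := IsIntegral.of_finite ℚ ζ
  have h1 : Fintype.card (F →+* ℂ) = Module.finrank ℚ F :=
    NumberField.Embeddings.card F ℂ
  have h2 : Module.finrank ℚ (IntermediateField.adjoin ℚ ({ζ} : Set F)) =
      (minpoly ℚ ζ).natDegree := IntermediateField.adjoin.finrank hint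
  rw [hF] at h2
  have h3 : Module.finrank ℚ (⊤ : IntermediateField ℚ F) = Module.finrank ℚ F := by
    exact IntermediateField.finrank_top'
  rw [h1, ← h3, h2, ← Polynomial.cyclotomic_eq_minpoly_rat hζ hn,
    Polynomial.natDegree_cyclotomic]

/-- Isometry content of Lemma 5.12 (Kitaoka): let `K₁ = ℚ(ζ₁)`, `K₂ = ℚ(ζ₂)` be the
`n₁`-th and `n₂`-th cyclotomic fields with `n₁, n₂` coprime, embedded via `ι₁, ι₂` in the
`n`-th cyclotomic field `K = ℚ(ζ₁ζ₂)`, `n = n₁n₂`. Then for all `a, a′ ∈ K₁`, `b, b′ ∈ K₂`,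
`Σ_{σ : K → ℂ} σ(ab)·conj(σ(a′b′)) = (Σ_{σ₁} σ₁(a)conj(σ₁(a′)))·(Σ_{σ₂} σ₂(b)conj(σ₂(b′)))`. -/
theorem statement10 (n₁ n₂ : ℕ) (h₁pos : 0 < n₁) (h₂pos : 0 < n₂)
    (hcop : Nat.Coprime n₁ n₂)
    (K₁ K₂ K : Type*) [Field K₁] [NumberField K₁] [Field K₂] [NumberField K₂]
    [Field K] [NumberField K]
    (ι₁ : K₁ →+* K) (ι₂ : K₂ →+* K)
    (ζ₁ : K₁) (ζ₂ : K₂)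
    (hζ₁ : IsPrimitiveRoot ζ₁ n₁) (hζ₂ : IsPrimitiveRoot ζ₂ n₂)
    (hK₁ : IntermediateField.adjoin ℚ ({ζ₁} : Set K₁) = ⊤)
    (hK₂ : IntermediateField.adjoin ℚ ({ζ₂} : Set K₂) = ⊤)
    (hK : IntermediateField.adjoin ℚ ({ι₁ ζ₁ * ι₂ ζ₂} : Set K) = ⊤)
    (a a' : K₁) (b b' : K₂) :
    ∑ σ : K →+* ℂ, σ (ι₁ a * ι₂ b) * (starRingEnd ℂ) (σ (ι₁ a' * ι₂ b')) =
      (∑ σ₁ : K₁ →+* ℂ, σ₁ a * (starRingEnd ℂ) (σ₁ a')) *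
        (∑ σ₂ : K₂ →+* ℂ, σ₂ b * (starRingEnd ℂ) (σ₂ b')) := by
  -- the generator is a primitive n₁n₂-th root of unity
  have hx : IsPrimitiveRoot (ι₁ ζ₁) n₁ := hζ₁.map_of_injective ι₁.injective
  have hy : IsPrimitiveRoot (ι₂ ζ₂) n₂ := hζ₂.map_of_injective ι₂.injective
  have hord : orderOf (ι₁ ζ₁ * ι₂ ζ₂) = n₁ * n₂ := by
    rw [(Commute.all (ι₁ ζ₁) (ι₂ ζ₂)).orderOf_mul_eq_mul_orderOf_of_coprime
      (by rw [← hx.eq_orderOf, ← hy.eq_orderOf]; exact hcop),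
      ← hx.eq_orderOf, ← hy.eq_orderOf]
  have hgen : IsPrimitiveRoot (ι₁ ζ₁ * ι₂ ζ₂) (n₁ * n₂) := by
    rw [← hord]; exact IsPrimitiveRoot.orderOf _
  -- cardinalities
  have hc : Fintype.card (K →+* ℂ) = Fintype.card ((K₁ →+* ℂ) × (K₂ →+* ℂ)) := by
    rw [card_emb_cyclo (n₁ * n₂) (Nat.mul_pos h₁pos h₂pos) K _ hgen hK,
      Fintype.card_prod, card_emb_cyclo n₁ h₁pos K₁ ζ₁ hζ₁ hK₁,
      card_emb_cyclo n₂ h₂pos K₂ ζ₂ hζ₂ hK₂, Nat.totient_mul hcop]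
  -- the restriction map and its injectivity
  set Φ : (K →+* ℂ) → (K₁ →+* ℂ) × (K₂ →+* ℂ) := fun σ => (σ.comp ι₁, σ.comp ι₂) with hΦ
  have hAlg : Algebra.adjoin ℚ ({ι₁ ζ₁ * ι₂ ζ₂} : Set K) = ⊤ := by
    have := IntermediateField.adjoin_simple_toSubalgebra_of_isAlgebraic
      (IsIntegral.of_finite ℚ (ι₁ ζ₁ * ι₂ ζ₂)).isAlgebraic
    rw [← this]
    have : (IntermediateField.adjoin ℚ ({ι₁ ζ₁ * ι₂ ζ₂} : Set K)) = ⊤ := hK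
    rw [show (ℚ⟮ι₁ ζ₁ * ι₂ ζ₂⟯ : IntermediateField ℚ K) =
      IntermediateField.adjoin ℚ ({ι₁ ζ₁ * ι₂ ζ₂} : Set K) from rfl, this]
    rfl
  have hinj : Function.Injective Φ := by
    intro σ τ h
    have h1 : σ.comp ι₁ = τ.comp ι₁ := congrArg Prod.fst h
    have h2 : σ.comp ι₂ = τ.comp ι₂ := congrArg Prod.snd h
    have key : σ.toRatAlgHom = τ.toRatAlgHom := by
      apply AlgHom.ext_of_adjoin_eq_top hAlg
      intro x hx
      rw [Set.mem_singleton_iff] at hx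
      subst hx
      show σ (ι₁ ζ₁ * ι₂ ζ₂) = τ (ι₁ ζ₁ * ι₂ ζ₂)
      simp only [map_mul, ← RingHom.comp_apply, h1, h2]
    ext x
    exact congrFun (congrArg (fun f => f.toFun) (congrArg AlgHom.toRingHom key)) x
  have hbij : Function.Bijective Φ :=
    (Fintype.bijective_iff_injective_and_card Φ).2 ⟨hinj, hc⟩
  -- rewrite both sides
  have lhs : ∀ σ : K →+* ℂ,
      σ (ι₁ a * ι₂ b) * (starRingEnd ℂ) (σ (ι₁ a' * ι₂ b')) =
      (((Φ σ).1 a * (starRingEnd ℂ) ((Φ σ).1 a')) *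
        ((Φ σ).2 b * (starRingEnd ℂ) ((Φ σ).2 b'))) := by
    intro σ
    simp only [hΦ, RingHom.comp_apply, map_mul]
    ring
  calc ∑ σ : K →+* ℂ, σ (ι₁ a * ι₂ b) * (starRingEnd ℂ) (σ (ι₁ a' * ι₂ b'))
      = ∑ σ : K →+* ℂ, (((Φ σ).1 a * (starRingEnd ℂ) ((Φ σ).1 a')) *
          ((Φ σ).2 b * (starRingEnd ℂ) ((Φ σ).2 b'))) := by
        exact Finset.sum_congr rfl fun σ _ => lhs σ
    _ = ∑ p : (K₁ →+* ℂ) × (K₂ →+* ℂ),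
          ((p.1 a * (starRingEnd ℂ) (p.1 a')) * (p.2 b * (starRingEnd ℂ) (p.2 b'))) :=
        Fintype.sum_bijective Φ hbij _ _ (fun σ => rfl)
    _ = (∑ σ₁ : K₁ →+* ℂ, σ₁ a * (starRingEnd ℂ) (σ₁ a')) *
          (∑ σ₂ : K₂ →+* ℂ, σ₂ b * (starRingEnd ℂ) (σ₂ b')) := by
        rw [Finset.sum_mul_sum, ← Finset.sum_product']
        rfl
end

section
/- For every integer n ≥ 4, the root lattice Dₙ = {x ∈ ℤⁿ : x₁ + ⋯ + xₙ is even}, viewed as a lattice in ℝⁿ with the standard inner product, is not of Voronoi's first kind: there do not exist vectors v₀, v₁, …, vₙ ∈ Dₙ such that (v₁, …, vₙ) is a ℤ-basis of Dₙ, v₀ + v₁ + ⋯ + vₙ = 0, and ⟨v_i, v_j⟩ ≤ 0 for all i ≠ j. -/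
/-- The root lattice `Dₙ = {x ∈ ℤⁿ : x₁ + ⋯ + xₙ is even}`, as a subset of euclidean
`ℝⁿ`. -/
def Dset (n : ℕ) : Set (EuclideanSpace ℝ (Fin n)) :=
  {x | (∀ i, ∃ m : ℤ, x i = (m : ℝ)) ∧ ∃ m : ℤ, ∑ i, x i = 2 * (m : ℝ)}

namespace NV

variable {n : ℕ}

lemma add_mem_D {x y : EuclideanSpace ℝ (Fin n)} (hx : x ∈ Dset n) (hy : y ∈ Dset n) :
    x + y ∈ Dset n := by
  obtain ⟨hx1, mx, hx2⟩ := hx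
  obtain ⟨hy1, my, hy2⟩ := hy
  refine ⟨fun i => ?_, mx + my, ?_⟩
  · obtain ⟨a, ha⟩ := hx1 i; obtain ⟨b, hb⟩ := hy1 i
    exact ⟨a + b, by push_cast; simp [ha, hb]⟩
  · have : ∀ i : Fin n, (x + y) i = x i + y i := fun i => rfl
    simp only [this, Finset.sum_add_distrib, hx2, hy2]
    push_cast; ring

lemma zsmul_mem_D (c : ℤ) {x : EuclideanSpace ℝ (Fin n)} (hx : x ∈ Dset n) :
    (c : ℝ) • x ∈ Dset n := by
  obtain ⟨hx1, mx, hx2⟩ := hx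
  refine ⟨fun i => ?_, c * mx, ?_⟩
  · obtain ⟨a, ha⟩ := hx1 i
    exact ⟨c * a, by push_cast; simp [ha]⟩
  · have : ∀ i : Fin n, ((c : ℝ) • x) i = (c:ℝ) * x i := fun i => rfl
    simp only [this, ← Finset.mul_sum, hx2]
    push_cast; ring

lemma zero_mem_D : (0 : EuclideanSpace ℝ (Fin n)) ∈ Dset n :=
  ⟨fun i => ⟨0, by simp⟩, 0, by simp⟩

lemma comb_mem_D {ι : Type*} (t : Finset ι) (f : ι → EuclideanSpace ℝ (Fin n)) (c : ι → ℤ)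
    (hf : ∀ i ∈ t, f i ∈ Dset n) : (∑ i ∈ t, (c i : ℝ) • f i) ∈ Dset n := by
  classical
  refine Finset.sum_induction _ (fun z => z ∈ Dset n) (fun a b ha hb => add_mem_D ha hb)
    zero_mem_D (fun i hi => zsmul_mem_D (c i) (hf i hi))

lemma sq_emod_two (z : ℤ) : z ^ 2 % 2 = z % 2 := by
  rcases Int.even_or_odd z with ⟨k, hk⟩ | ⟨k, hk⟩
  · have h2 : z ^ 2 = 2 * (2 * (k * k)) := by rw [hk]; ring
    omega
  · have h2 : z ^ 2 = 4 * (k * k) + 4 * k + 1 := by rw [hk]; ring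
    omega

lemma inner_self_D {x : EuclideanSpace ℝ (Fin n)} (hx : x ∈ Dset n) :
    ∃ K : ℤ, (inner ℝ x x : ℝ) = (K : ℝ) ∧ K % 2 = 0 ∧ (x ≠ 0 → 2 ≤ K) := by
  classical
  obtain ⟨hx1, mx, hx2⟩ := hx
  set z : Fin n → ℤ := fun j => (hx1 j).choose with hzdef
  have hz : ∀ j, x j = (z j : ℝ) := fun j => (hx1 j).choose_spec
  refine ⟨∑ j, z j ^ 2, ?_, ?_, ?_⟩
  · rw [PiLp.inner_apply]
    simp [RCLike.inner_apply, starRingEnd_apply, hz]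
  · have hsz : (∑ j, z j) = 2 * mx := by
      have : ((∑ j, z j : ℤ) : ℝ) = ((2 * mx : ℤ) : ℝ) := by
        push_cast
        rw [← hx2]
        exact Finset.sum_congr rfl fun j _ => (hz j).symm
      exact_mod_cast this
    have h1 : (∑ j, z j ^ 2) % 2 = (∑ j, z j) % 2 := by
      rw [Finset.sum_int_mod, Finset.sum_int_mod (f := z)]
      congr 1
      exact Finset.sum_congr rfl fun j _ => sq_emod_two (z j)
    omega
  · intro hx0
    have : ∃ j, z j ≠ 0 := by
      by_contra hall
      push_neg at hall
      apply hx0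
      apply PiLp.ext
      intro j
      simp [hz j, hall j]
    obtain ⟨j, hj⟩ := this
    have h1 : 1 ≤ z j ^ 2 := by rcases lt_or_gt_of_ne hj with h | h <;> nlinarith
    have h2 : 1 ≤ ∑ j, z j ^ 2 := le_trans h1 (Finset.single_le_sum (fun i _ => sq_nonneg (z i)) (Finset.mem_univ j))
    have h1' : (∑ j, z j ^ 2) % 2 = (∑ j, z j) % 2 := by
      rw [Finset.sum_int_mod, Finset.sum_int_mod (f := z)]
      congr 1
      exact Finset.sum_congr rfl fun j _ => sq_emod_two (z j)
    have hsz : (∑ j, z j) = 2 * mx := by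
      have : ((∑ j, z j : ℤ) : ℝ) = ((2 * mx : ℤ) : ℝ) := by
        push_cast
        rw [← hx2]
        exact Finset.sum_congr rfl fun j _ => (hz j).symm
      exact_mod_cast this
    omega


variable {v : Fin (n + 1) → EuclideanSpace ℝ (Fin n)}

lemma rep_eq (hsum : ∑ k, v k = 0) (c : Fin (n + 1) → ℤ) :
    ∑ k, (c k : ℝ) • v k = ∑ i : Fin n, ((c i.succ - c 0 : ℤ) : ℝ) • v i.succ := by
  have h0 : ∑ i : Fin n, v i.succ = -v 0 := by
    have h := hsum
    rw [Fin.sum_univ_succ] at h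
    exact eq_neg_of_add_eq_zero_right (by rw [add_comm] at h ⊢; exact h)
  have : ∑ i : Fin n, ((c i.succ - c 0 : ℤ) : ℝ) • v i.succ
      = ∑ i : Fin n, (c i.succ : ℝ) • v i.succ - (c 0 : ℝ) • ∑ i : Fin n, v i.succ := by
    rw [Finset.smul_sum, ← Finset.sum_sub_distrib]
    refine Finset.sum_congr rfl fun i _ => ?_
    push_cast
    rw [sub_smul]
  rw [this, h0, Fin.sum_univ_succ]
  simp [smul_neg]
  abel

lemma sum_smul_inner (r s : Fin (n+1) → ℝ) :
    (inner ℝ (∑ k, r k • v k) (∑ l, s l • v l) : ℝ)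
      = ∑ k, ∑ l, r k * s l * (inner ℝ (v k) (v l) : ℝ) := by
  rw [sum_inner]
  refine Finset.sum_congr rfl fun k _ => ?_
  rw [inner_sum]
  refine Finset.sum_congr rfl fun l _ => ?_
  rw [real_inner_smul_left, real_inner_smul_right]
  ring

lemma row_sum_zero (hsum : ∑ k, v k = 0) (k : Fin (n+1)) :
    ∑ l, (inner ℝ (v k) (v l) : ℝ) = 0 := by
  rw [← inner_sum, hsum, inner_zero_right]

lemma col_sum_zero (hsum : ∑ k, v k = 0) (l : Fin (n+1)) :
    ∑ k, (inner ℝ (v k) (v l) : ℝ) = 0 := by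
  rw [← sum_inner, hsum, inner_zero_left]

/-- Selling's identity -/
lemma selling (hsum : ∑ k, v k = 0) (r : Fin (n+1) → ℝ) :
    ∑ k, ∑ l, (inner ℝ (v k) (v l) : ℝ) * (r k - r l) ^ 2
      = -2 * (inner ℝ (∑ k, r k • v k) (∑ l, r l • v l) : ℝ) := by
  have hrow : ∀ k : Fin (n+1), ∑ l, (inner ℝ (v k) (v l) : ℝ) * (r k - r l) ^ 2
      = ∑ l, ((inner ℝ (v k) (v l) : ℝ) * r l ^ 2) - 2 * ∑ l, (r k * r l * (inner ℝ (v k) (v l) : ℝ)) := by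
    intro k
    calc ∑ l, (inner ℝ (v k) (v l) : ℝ) * (r k - r l) ^ 2
        = ∑ l, ((inner ℝ (v k) (v l) : ℝ) * r l ^ 2 - 2 * (r k * r l * (inner ℝ (v k) (v l) : ℝ))
            + r k ^ 2 * (inner ℝ (v k) (v l) : ℝ)) := by
          exact Finset.sum_congr rfl fun l _ => by ring
      _ = (∑ l, ((inner ℝ (v k) (v l) : ℝ) * r l ^ 2) - 2 * ∑ l, (r k * r l * (inner ℝ (v k) (v l) : ℝ)))
            + r k ^ 2 * ∑ l, (inner ℝ (v k) (v l) : ℝ) := by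
          rw [Finset.sum_add_distrib, Finset.sum_sub_distrib, ← Finset.mul_sum, ← Finset.mul_sum]
      _ = ∑ l, ((inner ℝ (v k) (v l) : ℝ) * r l ^ 2) - 2 * ∑ l, (r k * r l * (inner ℝ (v k) (v l) : ℝ)) := by
          rw [row_sum_zero hsum k]; ring
  calc ∑ k, ∑ l, (inner ℝ (v k) (v l) : ℝ) * (r k - r l) ^ 2
      = ∑ k, (∑ l, ((inner ℝ (v k) (v l) : ℝ) * r l ^ 2) - 2 * ∑ l, (r k * r l * (inner ℝ (v k) (v l) : ℝ))) := by
        exact Finset.sum_congr rfl fun k _ => hrow k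
    _ = ∑ k, ∑ l, ((inner ℝ (v k) (v l) : ℝ) * r l ^ 2)
        - 2 * ∑ k, ∑ l, (r k * r l * (inner ℝ (v k) (v l) : ℝ)) := by
        rw [Finset.sum_sub_distrib, ← Finset.mul_sum]
    _ = -2 * (inner ℝ (∑ k, r k • v k) (∑ l, r l • v l) : ℝ) := by
        have hz : ∑ k, ∑ l, ((inner ℝ (v k) (v l) : ℝ) * r l ^ 2) = 0 := by
          rw [Finset.sum_comm]
          refine Finset.sum_eq_zero fun l _ => ?_
          rw [← Finset.sum_mul, col_sum_zero hsum l, zero_mul]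
        rw [hz, sum_smul_inner]
        ring

/-- integer coefficients over all n+1 vectors are unique up to a constant -/
lemma uniq_const (hvD : ∀ k, v k ∈ Dset n) (hsum : ∑ k, v k = 0)
    (hrep : ∀ x ∈ Dset n, ∃! c : Fin n → ℤ, x = ∑ i : Fin n, c i • v i.succ)
    (c d : Fin (n + 1) → ℤ) (h : ∑ k, (c k : ℝ) • v k = ∑ k, (d k : ℝ) • v k) :
    ∀ k, c k - c 0 = d k - d 0 := by
  have hx : (∑ k, (c k : ℝ) • v k) ∈ Dset n :=
    comb_mem_D Finset.univ v c fun k _ => hvD k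
  obtain ⟨a, _, hu⟩ := hrep _ hx
  have hzs : ∀ (e : Fin (n+1) → ℤ), ∑ i : Fin n, ((e i.succ - e 0 : ℤ) : ℝ) • v i.succ
      = ∑ i : Fin n, (fun i => e i.succ - e 0) i • v i.succ := by
    intro e
    exact Finset.sum_congr rfl fun i _ => by rw [Int.cast_smul_eq_zsmul]
  have h1 : (fun i => c i.succ - c 0) = a := by
    apply hu
    rw [rep_eq hsum c, hzs c]
  have h2 : (fun i => d i.succ - d 0) = a := by
    apply hu
    rw [h, rep_eq hsum d, hzs d]
  intro k
  induction k using Fin.cases with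
  | zero => simp
  | succ i =>
      have := congrFun (h1.trans h2.symm) i
      simpa using this

/-- integer bracket inequality for the coarea step -/
lemma bracket (a A B : ℤ) :
    ((if a + 1 ≤ A then (1:ℤ) else 0) - (if a + 1 ≤ B then 1 else 0)) ^ 2
      + ((if a + 2 ≤ A then (1:ℤ) else 0) - (if a + 2 ≤ B then 1 else 0)) ^ 2
      ≤ (A - B) ^ 2 := by
  have h2 : ∀ C D : ℤ, 2 ≤ C - D → 2 ≤ (C - D)^2 := by intro C D h; nlinarith
  have h1 : ∀ C D : ℤ, C ≠ D → 1 ≤ (C - D)^2 := by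
    intro C D h
    rcases lt_or_gt_of_ne h with h | h
    · nlinarith
    · nlinarith
  split_ifs <;> simp_all <;> first
    | nlinarith [sq_nonneg (A - B)]
    | (have := h2 A B (by omega); nlinarith)
    | (have := h2 B A (by omega); nlinarith)
    | (have := h1 A B (by omega); nlinarith)
    | (have := h1 B A (by omega); nlinarith)

lemma coarea (hvD : ∀ k, v k ∈ Dset n) (hsum : ∑ k, v k = 0)
    (hrep : ∀ x ∈ Dset n, ∃! c : Fin n → ℤ, x = ∑ i : Fin n, c i • v i.succ)
    (hneg : ∀ k l, k ≠ l → (inner ℝ (v k) (v l) : ℝ) ≤ 0)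
    (c : Fin (n + 1) → ℤ)
    (h2 : (inner ℝ (∑ k, (c k : ℝ) • v k) (∑ k, (c k : ℝ) • v k) : ℝ) = 2) :
    ∃ t : ℤ, ∀ k, c k = t ∨ c k = t + 1 := by
  classical
  obtain ⟨kmin, -, hmin⟩ := Finset.exists_min_image Finset.univ c ⟨0, Finset.mem_univ 0⟩
  obtain ⟨kmax, -, hmax⟩ := Finset.exists_max_image Finset.univ c ⟨0, Finset.mem_univ 0⟩
  simp only [Finset.mem_univ, forall_true_left] at hmin hmax
  set a := c kmin with ha
  by_cases hba : c kmax ≤ a + 1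
  · exact ⟨a, fun k => by have := hmin k; have := hmax k; omega⟩
  exfalso
  push_neg at hba
  set σ : Fin (n+1) → ℤ := fun k => if a + 1 ≤ c k then 1 else 0 with hσ
  set τ : Fin (n+1) → ℤ := fun k => if a + 2 ≤ c k then 1 else 0 with hτ
  set y := ∑ k, (σ k : ℝ) • v k with hy
  set z := ∑ k, (τ k : ℝ) • v k with hz
  have hyD : y ∈ Dset n := comb_mem_D Finset.univ v σ fun k _ => hvD k
  have hzD : z ∈ Dset n := comb_mem_D Finset.univ v τ fun k _ => hvD k
  have hymin : σ kmin = 0 := if_neg (by omega)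
  have hymax : σ kmax = 1 := if_pos (by omega)
  have hzmin : τ kmin = 0 := if_neg (by omega)
  have hzmax : τ kmax = 1 := if_pos (by omega)
  have hy0 : y ≠ 0 := by
    intro h
    have hu := uniq_const hvD hsum hrep σ (fun _ => 0) (by rw [← hy, h]; simp)
    have e1 : σ kmin - σ 0 = 0 := by simpa using hu kmin
    have e2 : σ kmax - σ 0 = 0 := by simpa using hu kmax
    omega
  have hz0 : z ≠ 0 := by
    intro h
    have hu := uniq_const hvD hsum hrep τ (fun _ => 0) (by rw [← hz, h]; simp)
    have e1 : τ kmin - τ 0 = 0 := by simpa using hu kmin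
    have e2 : τ kmax - τ 0 = 0 := by simpa using hu kmax
    omega
  obtain ⟨Ky, hKy, -, hKy2⟩ := inner_self_D hyD
  obtain ⟨Kz, hKz, -, hKz2⟩ := inner_self_D hzD
  have hKy' := hKy2 hy0
  have hKz' := hKz2 hz0
  -- key inequality
  have hpt : ∀ k l : Fin (n+1),
      (inner ℝ (v k) (v l) : ℝ) * (((c k : ℝ)) - (c l : ℝ)) ^ 2
        ≤ (inner ℝ (v k) (v l) : ℝ) * (((σ k : ℝ)) - (σ l : ℝ)) ^ 2
          + (inner ℝ (v k) (v l) : ℝ) * (((τ k : ℝ)) - (τ l : ℝ)) ^ 2 := by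
    intro k l
    rcases eq_or_ne k l with rfl | hkl
    · simp
    · have hG := hneg k l hkl
      have hb := bracket a (c k) (c l)
      have hbR : ((σ k : ℝ) - σ l) ^ 2 + ((τ k : ℝ) - τ l) ^ 2 ≤ ((c k : ℝ) - c l) ^ 2 := by
        have : ((σ k - σ l)^2 + (τ k - τ l)^2 : ℤ) ≤ ((c k - c l)^2 : ℤ) := by
          simpa [hσ, hτ] using hb
        exact_mod_cast this
      nlinarith [hbR, hG]
  have hsum1 : ∑ k, ∑ l, (inner ℝ (v k) (v l) : ℝ) * (((c k : ℝ)) - (c l : ℝ)) ^ 2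
      ≤ (∑ k, ∑ l, (inner ℝ (v k) (v l) : ℝ) * (((σ k : ℝ)) - (σ l : ℝ)) ^ 2)
        + ∑ k, ∑ l, (inner ℝ (v k) (v l) : ℝ) * (((τ k : ℝ)) - (τ l : ℝ)) ^ 2 := by
    rw [← Finset.sum_add_distrib]
    refine Finset.sum_le_sum fun k _ => ?_
    rw [← Finset.sum_add_distrib]
    exact Finset.sum_le_sum fun l _ => hpt k l
  rw [selling hsum (fun k => (c k : ℝ)), selling hsum (fun k => (σ k : ℝ)),
    selling hsum (fun k => (τ k : ℝ))] at hsum1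
  rw [h2] at hsum1
  rw [← hy] at hsum1
  rw [← hz] at hsum1
  rw [hKy, hKz] at hsum1
  have : (2:ℝ) ≤ Ky := by exact_mod_cast hKy'
  have : (2:ℝ) ≤ Kz := by exact_mod_cast hKz'
  linarith

def parity (p : Fin 4 → Bool) : Bool := (p 0 != p 1) != (p 2 != p 3)

lemma parity_diff2 (a b : Fin 4 → ℤ) (ha : ∀ i, a i = 0 ∨ a i = 1) (hb : ∀ i, b i = 0 ∨ b i = 1)
    (h : a 0 + a 1 + a 2 + a 3 - (b 0 + b 1 + b 2 + b 3) = -2 ∨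
         a 0 + a 1 + a 2 + a 3 - (b 0 + b 1 + b 2 + b 3) = 0 ∨
         a 0 + a 1 + a 2 + a 3 - (b 0 + b 1 + b 2 + b 3) = 2) :
    parity (fun i => decide (a i = 1)) = parity (fun i => decide (b i = 1)) := by
  unfold parity
  beta_reduce
  rcases ha 0 with h0 | h0 <;> rcases ha 1 with h1 | h1 <;> rcases ha 2 with h2 | h2 <;>
    rcases ha 3 with h3 | h3 <;> rcases hb 0 with g0 | g0 <;> rcases hb 1 with g1 | g1 <;>
    rcases hb 2 with g2 | g2 <;> rcases hb 3 with g3 | g3 <;>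
    rw [h0, h1, h2, h3, g0, g1, g2, g3] at h ⊢ <;> revert h <;> decide

def compl4 (p : Fin 4 → Bool) : Fin 4 → Bool := fun i => !p i
def rho (p : Fin 4 → Bool) : Fin 4 → Bool := if p 0 then compl4 p else p

lemma parity_compl (p : Fin 4 → Bool) : parity (compl4 p) = parity p := by
  simp [parity, compl4]

lemma parity_rho (p : Fin 4 → Bool) : parity (rho p) = parity p := by
  unfold rho; split_ifs <;> simp [parity_compl]

lemma rho_zero (p : Fin 4 → Bool) : rho p 0 = false := by
  unfold rho; split_ifs with h <;> simp [compl4, h]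

lemma rho_cases (p q : Fin 4 → Bool) (h : rho p = rho q) : p = q ∨ p = compl4 q := by
  unfold rho at h
  split_ifs at h with h1 h2 h2
  · left; funext i; have := congrFun h i; simp only [compl4] at this
    exact Bool.not_inj this
  · right; funext i; have := congrFun h i; simp only [compl4] at this ⊢
    rw [← this, Bool.not_not]
  · right; funext i; have := congrFun h i; simp only [compl4] at this ⊢
    rw [this]
  · left; exact h

lemma card_filter_bool (c : Bool) :
    (Finset.univ.filter (fun r : Fin 4 → Bool => r 0 = false ∧ parity r = c)).card = 4 := by
  cases c <;> decide

lemma pairlemma (a b : ℤ) (ha : a = 1 ∨ a = -1) (hb : b = 1 ∨ b = -1) :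
    ∃ u w : ℤ, u + w = a ∧ u - w = b ∧ u ^ 2 + w ^ 2 = 1 := by
  rcases ha with rfl | rfl <;> rcases hb with rfl | rfl
  exacts [⟨1, 0, by norm_num⟩, ⟨0, 1, by norm_num⟩, ⟨0, -1, by norm_num⟩, ⟨-1, 0, by norm_num⟩]


end NV

set_option maxHeartbeats 2000000 in
open NV in
/-- Proposition B.4: for `n ≥ 4`, the root lattice `Dₙ` is not of Voronoi's first kind:
it admits no obtuse superbase, i.e. no vectors `v₀, v₁, …, vₙ ∈ Dₙ` with `(v₁, …, vₙ)` a
ℤ-basis of `Dₙ`, `v₀ + ⋯ + vₙ = 0` and `⟨v_i, v_j⟩ ≤ 0` for all `i ≠ j`. -/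
theorem statement16 (n : ℕ) (hn : 4 ≤ n) :
    ¬ ∃ v : Fin (n + 1) → EuclideanSpace ℝ (Fin n),
        (∀ k, v k ∈ Dset n) ∧
        (∀ x ∈ Dset n, ∃! c : Fin n → ℤ, x = ∑ i : Fin n, c i • v i.succ) ∧
        (∑ k, v k = 0) ∧
        (∀ k l, k ≠ l → (inner ℝ (v k) (v l) : ℝ) ≤ 0) := by
  classical
  rintro ⟨v, hvD, hrep, hsum, hneg⟩
  -- small indices
  set idx : Fin 4 → Fin n := fun t => ⟨t.1, by omega⟩ with hidx
  have hidxinj : ∀ p q : Fin 4, idx p = idx q ↔ p = q := by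
    intro p q
    constructor
    · intro h; exact Fin.ext (by simpa [hidx, Fin.ext_iff] using h)
    · intro h; rw [h]
  set Evec : Fin 4 → EuclideanSpace ℝ (Fin n) := fun t => EuclideanSpace.single (idx t) 1 with hEvec
  have hE : ∀ p q : Fin 4, (inner ℝ (Evec p) (Evec q) : ℝ) = if p = q then 1 else 0 := by
    intro p q
    rcases eq_or_ne p q with rfl | h
    · simp [hEvec, EuclideanSpace.inner_single_left, EuclideanSpace.single_apply]
    · have hne : idx p ≠ idx q := fun hh => h ((hidxinj p q).mp hh)
      simp only [hEvec, EuclideanSpace.inner_single_left, EuclideanSpace.single_apply,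
        starRingEnd_apply, star_one, one_mul]
      rw [if_neg hne, if_neg h]
  have hIC : ∀ r s : Fin 4 → ℝ,
      (inner ℝ (∑ t, r t • Evec t) (∑ t, s t • Evec t) : ℝ) = ∑ t, r t * s t := by
    intro r s
    rw [sum_inner]
    refine Finset.sum_congr rfl fun t _ => ?_
    rw [inner_sum]
    have : ∀ u, (inner ℝ (r t • Evec t) (s u • Evec u) : ℝ)
        = if t = u then r t * s u else 0 := by
      intro u
      rw [real_inner_smul_left, real_inner_smul_right, hE]
      split_ifs <;> ring
    rw [Finset.sum_congr rfl fun u _ => this u, Finset.sum_ite_eq]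
    simp
  -- integer combinations of the four unit vectors with even coefficient sum lie in Dset
  have scomb : ∀ z : Fin 4 → ℤ, (z 0 + z 1 + z 2 + z 3) % 2 = 0 →
      (∑ t, (z t : ℝ) • Evec t) ∈ Dset n := by
    intro z hz
    constructor
    · intro j
      refine ⟨∑ t, if j = idx t then z t else 0, ?_⟩
      have happ : (∑ t, (z t : ℝ) • Evec t) j = ∑ t, (z t : ℝ) * (if j = idx t then 1 else 0) := by
        rw [WithLp.ofLp_sum, Finset.sum_apply]
        refine Finset.sum_congr rfl fun t _ => ?_
        simp [hEvec, EuclideanSpace.single_apply]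
      rw [happ]
      push_cast
      refine Finset.sum_congr rfl fun t _ => ?_
      split_ifs <;> simp
    · refine ⟨(z 0 + z 1 + z 2 + z 3) / 2, ?_⟩
      have happ : ∀ j, (∑ t, (z t : ℝ) • Evec t) j = ∑ t, (z t : ℝ) * (if j = idx t then 1 else 0) := by
        intro j
        rw [WithLp.ofLp_sum, Finset.sum_apply]
        refine Finset.sum_congr rfl fun t _ => ?_
        simp [hEvec, EuclideanSpace.single_apply]
      have : ∑ j, (∑ t, (z t : ℝ) • Evec t) j = ∑ t, (z t : ℝ) := by
        rw [Finset.sum_congr rfl fun j _ => happ j, Finset.sum_comm]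
        refine Finset.sum_congr rfl fun t _ => ?_
        rw [← Finset.mul_sum]
        simp [Finset.sum_ite_eq']
      rw [this, Fin.sum_univ_four]
      have h2 : z 0 + z 1 + z 2 + z 3 = 2 * ((z 0 + z 1 + z 2 + z 3) / 2) := by omega
      have h3 : ((z 0 + z 1 + z 2 + z 3 : ℤ) : ℝ) = ((2 * ((z 0 + z 1 + z 2 + z 3) / 2) : ℤ) : ℝ) := by
        exact_mod_cast h2
      push_cast at h3
      linarith
  -- the four special vectors of D_n
  set zX : Fin 4 → Fin 4 → ℤ := ![![1,1,0,0], ![1,-1,0,0], ![0,0,1,1], ![0,0,1,-1]] with hzX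
  set X : Fin 4 → EuclideanSpace ℝ (Fin n) := fun i => ∑ t, (zX i t : ℝ) • Evec t with hX
  have hXD : ∀ i, X i ∈ Dset n := by
    intro i
    refine scomb (zX i) ?_
    fin_cases i <;> decide
  have hXX : ∀ i j, (inner ℝ (X i) (X j) : ℝ) = if i = j then 2 else 0 := by
    intro i j
    rw [hX]
    rw [hIC]
    fin_cases i <;> fin_cases j <;> norm_num [hzX, Fin.sum_univ_four, Fin.ext_iff, Matrix.cons_val_two, Matrix.cons_val_three]
  -- extract 0/1 coefficient representations of norm-2 lattice vectors
  have key : ∀ x ∈ Dset n, (inner ℝ x x : ℝ) = 2 → ∃ sf : Fin (n+1) → ℤ,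
      (∀ k, sf k = 0 ∨ sf k = 1) ∧ x = ∑ k, (sf k : ℝ) • v k := by
    intro x hx hx2
    obtain ⟨aa, haa, -⟩ := hrep x hx
    set cc : Fin (n+1) → ℤ := Fin.cases 0 aa with hcc
    have hxc : x = ∑ k, (cc k : ℝ) • v k := by
      rw [Fin.sum_univ_succ]
      simp only [hcc, Fin.cases_zero, Fin.cases_succ, Int.cast_zero, zero_smul, zero_add]
      rw [haa]
      exact Finset.sum_congr rfl fun i _ => (Int.cast_smul_eq_zsmul ℝ (aa i) (v i.succ)).symm
    obtain ⟨t, ht⟩ := NV.coarea hvD hsum hrep hneg cc (by rw [← hxc]; exact hx2)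
    refine ⟨fun k => cc k - t, fun k => by have := ht k; show cc k - t = 0 ∨ cc k - t = 1; omega, ?_⟩
    have hsplit : ∑ k, ((cc k - t : ℤ) : ℝ) • v k
        = ∑ k, (cc k : ℝ) • v k - (t : ℝ) • ∑ k, v k := by
      rw [Finset.smul_sum, ← Finset.sum_sub_distrib]
      refine Finset.sum_congr rfl fun k _ => ?_
      push_cast
      rw [sub_smul]
    rw [hsplit, hsum, smul_zero, sub_zero, hxc]
  choose sfun hs01 hXs using fun i => key (X i) (hXD i) (by rw [hXX]; simp)
  -- swapping sums
  have hswap : ∀ (w : Fin 4 → ℝ) (u : Fin 4 → Fin (n+1) → ℝ),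
      ∑ i, w i • (∑ k, u i k • v k) = ∑ k, (∑ i, w i * u i k) • v k := by
    intro w u
    simp_rw [Finset.smul_sum, smul_smul]
    rw [Finset.sum_comm]
    simp_rw [Finset.sum_smul]
  have hswapE : ∀ (w : Fin 4 → ℝ) (u : Fin 4 → Fin 4 → ℝ),
      ∑ i, w i • (∑ t, u i t • Evec t) = ∑ t, (∑ i, w i * u i t) • Evec t := by
    intro w u
    simp_rw [Finset.smul_sum, smul_smul]
    rw [Finset.sum_comm]
    simp_rw [Finset.sum_smul]
  -- two-valuedness of each ±1 combination
  have Hg : ∀ ε : Fin 4 → ℤ, (∀ i, ε i = 1 ∨ ε i = -1) →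
      ∃ T : ℤ, ∀ k, (∑ i, ε i * sfun i k) = T ∨ (∑ i, ε i * sfun i k) = T + 2 := by
    intro ε hε
    obtain ⟨u1, w1, hs1, hd1, hq1⟩ := NV.pairlemma (ε 0) (ε 1) (hε 0) (hε 1)
    obtain ⟨u2, w2, hs2, hd2, hq2⟩ := NV.pairlemma (ε 2) (ε 3) (hε 2) (hε 3)
    set wv : Fin 4 → ℤ := ![u1, w1, u2, w2] with hwv
    set m := ∑ t, (wv t : ℝ) • Evec t with hm
    have hmD : m ∈ Dset n := by
      refine scomb wv ?_
      have e0 := hε 0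
      have e2 := hε 2
      have : wv 0 + wv 1 + wv 2 + wv 3 = ε 0 + ε 2 := by
        norm_num [hwv, Matrix.vecHead, Matrix.vecTail, Matrix.cons_val_two, Matrix.cons_val_three]
        omega
      rw [this]
      omega
    have hm2 : (inner ℝ m m : ℝ) = 2 := by
      rw [hm, hIC, Fin.sum_univ_four]
      have hz : ((u1 ^ 2 + w1 ^ 2) + (u2 ^ 2 + w2 ^ 2) : ℤ) = 2 := by rw [hq1, hq2]; norm_num
      have hzr : ((u1:ℝ) ^ 2 + (w1:ℝ) ^ 2) + ((u2:ℝ) ^ 2 + (w2:ℝ) ^ 2) = 2 := by exact_mod_cast hz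
      norm_num [hwv, Matrix.vecHead, Matrix.vecTail, Matrix.cons_val_two, Matrix.cons_val_three]
      all_goals nlinarith [hzr]
    obtain ⟨b, hb01, hmb⟩ := key m hmD hm2
    -- ∑ε•X = 2m as combinations of v
    have hXm : ∑ i, (ε i : ℝ) • X i = (2:ℝ) • m := by
      have c1 : ((u1 : ℝ) + w1) = (ε 0 : ℝ) := by exact_mod_cast hs1
      have c2 : ((u1 : ℝ) - w1) = (ε 1 : ℝ) := by exact_mod_cast hd1
      have c3 : ((u2 : ℝ) + w2) = (ε 2 : ℝ) := by exact_mod_cast hs2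
      have c4 : ((u2 : ℝ) - w2) = (ε 3 : ℝ) := by exact_mod_cast hd2
      rw [hX, hm]
      rw [hswapE (fun i => (ε i : ℝ)) (fun i t => (zX i t : ℝ)), Finset.smul_sum]
      refine Finset.sum_congr rfl fun t _ => ?_
      rw [smul_smul]
      congr 1
      rw [Fin.sum_univ_four]
      fin_cases t <;> norm_num [hzX, hwv, Matrix.vecHead, Matrix.vecTail, Matrix.cons_val_two, Matrix.cons_val_three] <;> linarith
    have hXsum : ∑ i, (ε i : ℝ) • X i = ∑ k, ((∑ i, ε i * sfun i k : ℤ) : ℝ) • v k := by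
      calc ∑ i, (ε i : ℝ) • X i
          = ∑ i, (ε i : ℝ) • (∑ k, (sfun i k : ℝ) • v k) := by
            exact Finset.sum_congr rfl fun i _ => by rw [← hXs i]
        _ = ∑ k, (∑ i, (ε i : ℝ) * (sfun i k : ℝ)) • v k :=
            hswap (fun i => (ε i : ℝ)) (fun i k => (sfun i k : ℝ))
        _ = ∑ k, ((∑ i, ε i * sfun i k : ℤ) : ℝ) • v k := by
            refine Finset.sum_congr rfl fun k _ => ?_
            congr 1
            push_cast
            rfl
    have h2m : ∑ k, ((2 * b k : ℤ) : ℝ) • v k = (2:ℝ) • m := by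
      rw [hmb, Finset.smul_sum]
      refine Finset.sum_congr rfl fun k _ => ?_
      rw [smul_smul]
      congr 1
      push_cast
      ring
    have hu := NV.uniq_const hvD hsum hrep (fun k => ∑ i, ε i * sfun i k) (fun k => 2 * b k)
      (by rw [← hXsum, hXm, ← h2m])
    refine ⟨(∑ i, ε i * sfun i 0) - 2 * b 0, fun k => ?_⟩
    have h1 : (∑ i, ε i * sfun i k) - (∑ i, ε i * sfun i 0) = 2 * b k - 2 * b 0 := hu k
    have h2 := hb01 k
    have h3 := hb01 0
    omega
  -- pairwise difference facts
  have hdiffs : ∀ k l : Fin (n+1), ∀ ε : Fin 4 → ℤ, (∀ i, ε i = 1 ∨ ε i = -1) →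
      (∑ i, ε i * sfun i k) - (∑ i, ε i * sfun i l) = -2 ∨
      (∑ i, ε i * sfun i k) - (∑ i, ε i * sfun i l) = 0 ∨
      (∑ i, ε i * sfun i k) - (∑ i, ε i * sfun i l) = 2 := by
    intro k l ε hε
    obtain ⟨T, hT⟩ := Hg ε hε
    have h1 := hT k
    have h2 := hT l
    omega
  -- patterns
  set spat : Fin (n+1) → (Fin 4 → Bool) := fun k i => decide (sfun i k = 1) with hspat
  have hbridge : ∀ i k, sfun i k = (if spat k i then 1 else 0) := by
    intro i k
    rcases hs01 i k with h | h <;> simp [hspat, h]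
  have hpar : ∀ k l, NV.parity (spat k) = NV.parity (spat l) := by
    intro k l
    have e := hdiffs k l (fun _ => 1) (fun _ => Or.inl rfl)
    rw [Fin.sum_univ_four, Fin.sum_univ_four] at e
    simp only [one_mul] at e
    exact NV.parity_diff2 (fun i => sfun i k) (fun i => sfun i l)
      (fun i => hs01 i k) (fun i => hs01 i l) e
  have hncompl : ∀ k l, spat k ≠ NV.compl4 (spat l) := by
    intro k l h
    have hd : ∀ i, sfun i k - sfun i l = 1 ∨ sfun i k - sfun i l = -1 := by
      intro i
      have hki := hbridge i k
      have hli := hbridge i l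
      have hkl : spat k i = !spat l i := by rw [h]; rfl
      rcases Bool.dichotomy (spat l i) with hb | hb <;>
        rw [hb] at hkl <;> simp [hkl, hb] at hki hli <;> omega
    have hterm : ∀ i, (sfun i k - sfun i l) * sfun i k - (sfun i k - sfun i l) * sfun i l = 1 := by
      intro i
      have hdi := hd i
      rcases hs01 i k with hk | hk <;> rcases hs01 i l with hl | hl <;>
        rw [hk, hl] at hdi ⊢ <;> omega
    have e := hdiffs k l (fun i => sfun i k - sfun i l) hd
    rw [Fin.sum_univ_four, Fin.sum_univ_four] at e
    beta_reduce at e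
    have t0 := hterm 0
    have t1 := hterm 1
    have t2 := hterm 2
    have t3 := hterm 3
    rcases e with e | e | e <;> linarith
  -- at most 4 patterns
  set T' : Finset (Fin 4 → Bool) := Finset.univ.image spat with hT'
  have hcard : T'.card ≤ 4 := by
    have h1 : (T'.image NV.rho).card = T'.card := by
      apply Finset.card_image_of_injOn
      intro p hp q hq hpq
      rcases NV.rho_cases p q hpq with h | h
      · exact h
      · exfalso
        obtain ⟨k, -, rfl⟩ := Finset.mem_image.mp (Finset.mem_coe.mp hp)
        obtain ⟨l, -, rfl⟩ := Finset.mem_image.mp (Finset.mem_coe.mp hq)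
        exact hncompl k l h
    have h2 : T'.image NV.rho ⊆ Finset.univ.filter
        (fun r => r 0 = false ∧ NV.parity r = NV.parity (spat 0)) := by
      intro r hr
      obtain ⟨p, hp, rfl⟩ := Finset.mem_image.mp hr
      obtain ⟨k, -, rfl⟩ := Finset.mem_image.mp hp
      refine Finset.mem_filter.mpr ⟨Finset.mem_univ _, NV.rho_zero _, ?_⟩
      rw [NV.parity_rho]
      exact hpar k 0
    calc T'.card = (T'.image NV.rho).card := h1.symm
      _ ≤ (Finset.univ.filter (fun r => r 0 = false ∧ NV.parity r = NV.parity (spat 0))).card :=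
          Finset.card_le_card h2
      _ = 4 := NV.card_filter_bool _
  -- the five functions
  set F5 : Fin 5 → (Fin (n+1) → ℝ) :=
    Fin.cases (fun _ => (1:ℝ)) (fun i => fun k => (sfun i k : ℝ)) with hF5
  set chi : (Fin 4 → Bool) → (Fin (n+1) → ℝ) := fun p k => if spat k = p then 1 else 0 with hchi
  have hmemW : ∀ j, F5 j ∈ Submodule.span ℝ ((T'.image chi : Finset _) : Set (Fin (n+1) → ℝ)) := by
    intro j
    have hgen : ∀ p ∈ T', chi p ∈ Submodule.span ℝ ((T'.image chi : Finset _) : Set (Fin (n+1) → ℝ)) :=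
      fun p hp => Submodule.subset_span (Finset.mem_coe.mpr (Finset.mem_image_of_mem chi hp))
    induction j using Fin.cases with
    | zero =>
        have heq : F5 0 = ∑ p ∈ T', chi p := by
          funext k
          rw [Finset.sum_apply]
          simp only [hchi]
          rw [Finset.sum_ite_eq T' (spat k) (fun _ => (1:ℝ))]
          have : spat k ∈ T' := Finset.mem_image_of_mem spat (Finset.mem_univ k)
          simp [hF5, this]
        rw [heq]
        exact Submodule.sum_mem _ fun p hp => hgen p hp
    | succ i =>
        have heq : F5 i.succ = ∑ p ∈ T', (if p i then (1:ℝ) else 0) • chi p := by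
          funext k
          rw [Finset.sum_apply]
          have hterm : ∀ p ∈ T', ((if p i then (1:ℝ) else 0) • chi p) k
              = if spat k = p then (if p i then (1:ℝ) else 0) else 0 := by
            intro p _
            simp only [Pi.smul_apply, smul_eq_mul, hchi]
            split_ifs <;> ring
          rw [Finset.sum_congr rfl hterm, Finset.sum_ite_eq T' (spat k)]
          have hmem : spat k ∈ T' := Finset.mem_image_of_mem spat (Finset.mem_univ k)
          simp only [hmem, if_true, hF5, Fin.cases_succ]
          rw [hbridge i k]
          push_cast
          rfl
        rw [heq]
        exact Submodule.sum_mem _ fun p hp => Submodule.smul_mem _ _ (hgen p hp)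
  have hnotLI : ¬ LinearIndependent ℝ F5 := by
    intro hLI
    have h5 : (5:ℕ) ≤ (Set.range F5).finrank ℝ := by
      simpa using linearIndependent_iff_card_le_finrank_span.mp hLI
    have hsub : Set.range F5 ⊆ ((Submodule.span ℝ ((T'.image chi : Finset _) : Set (Fin (n+1) → ℝ)) : Submodule ℝ _) : Set (Fin (n+1) → ℝ)) := by
      rintro _ ⟨j, rfl⟩
      exact hmemW j
    have hmono := Set.finrank_mono (K := ℝ) hsub
    have hspanned : ((Submodule.span ℝ ((T'.image chi : Finset _) : Set (Fin (n+1) → ℝ)) : Submodule ℝ _) : Set (Fin (n+1) → ℝ)).finrank ℝ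
        = ((T'.image chi : Finset _) : Set (Fin (n+1) → ℝ)).finrank ℝ := by
      unfold Set.finrank
      rw [Submodule.span_span]
    have hle : ((T'.image chi : Finset _) : Set (Fin (n+1) → ℝ)).finrank ℝ ≤ (T'.image chi).card :=
      finrank_span_finset_le_card _
    have hcc : (T'.image chi).card ≤ 4 := le_trans (Finset.card_image_le) hcard
    omega
  obtain ⟨g, hg0, j0, hgj⟩ : ∃ g : Fin 5 → ℝ, (∑ j, g j • F5 j) = 0 ∧ ∃ j, g j ≠ 0 := by
    rw [Fintype.linearIndependent_iff] at hnotLI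
    push_neg at hnotLI
    obtain ⟨g, hg⟩ := hnotLI
    exact ⟨g, hg.1, hg.2⟩
  have heval : ∀ k, g 0 + ∑ i : Fin 4, g i.succ * (sfun i k : ℝ) = 0 := by
    intro k
    have h := congrFun hg0 k
    rw [Fintype.sum_apply] at h
    rw [Fin.sum_univ_succ] at h
    simpa [hF5] using h
  have hrel : ∑ i : Fin 4, g i.succ • X i = 0 := by
    calc ∑ i : Fin 4, g i.succ • X i
        = ∑ i : Fin 4, g i.succ • (∑ k, (sfun i k : ℝ) • v k) :=
          Finset.sum_congr rfl fun i _ => by rw [← hXs i]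
      _ = ∑ k, (∑ i : Fin 4, g i.succ * (sfun i k : ℝ)) • v k :=
          hswap (fun i => g i.succ) (fun i k => (sfun i k : ℝ))
      _ = ∑ k, (-(g 0)) • v k := by
          refine Finset.sum_congr rfl fun k _ => ?_
          have := heval k
          congr 1
          linarith
      _ = 0 := by rw [← Finset.smul_sum, hsum, smul_zero]
  have hlam : ∀ j : Fin 4, g j.succ = 0 := by
    intro j
    have hip : (inner ℝ (∑ i : Fin 4, g i.succ • X i) (X j) : ℝ) = 2 * g j.succ := by
      rw [sum_inner]
      have hterm : ∀ i, (inner ℝ (g i.succ • X i) (X j) : ℝ)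
          = if i = j then 2 * g i.succ else 0 := by
        intro i
        rw [real_inner_smul_left, hXX]
        split_ifs <;> ring
      rw [Finset.sum_congr rfl fun i _ => hterm i, Finset.sum_ite_eq' Finset.univ j]
      simp
    rw [hrel, inner_zero_left] at hip
    linarith
  have hg00 : g 0 = 0 := by
    have h := heval 0
    have hz : ∀ i : Fin 4, g i.succ * (sfun i 0 : ℝ) = 0 := fun i => by rw [hlam i]; ring
    rw [Finset.sum_congr rfl fun i _ => hz i] at h
    simpa using h
  -- contradiction
  rcases Fin.eq_zero_or_eq_succ j0 with rfl | ⟨i, rfl⟩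
  · exact hgj hg00
  · exact hgj (hlam i)
end

section
/- Fix n ≥ 1 and Selling parameters p_{ij} > 0 for 0 ≤ i < j ≤ n, and consider the lattice ℤⁿ in ℝⁿ with the inner product ⟨x, y⟩_p = Σ_{0 ≤ i < j ≤ n} p_{ij}(x_i − x_j)(y_i − y_j) (with the convention x₀ = y₀ = 0), with v_i = e_i for 1 ≤ i ≤ n, v₀ = −(e₁ + ⋯ + eₙ), and v_S = Σ_{i∈S} v_i for S ⊆ {0, …, n}. Let S and S′ be nonempty proper subsets of {0, …, n}. If there exists a point x in the Voronoi cell 𝒱 = {x ∈ ℝⁿ : ⟨x, x⟩_p ≤ ⟨x − ℓ, x − ℓ⟩_p for all ℓ ∈ ℤⁿ} such that 2⟨v_S, x⟩_p = ⟨v_S, v_S⟩_p and 2⟨v_{S′}, x⟩_p = ⟨v_{S′}, v_{S′}⟩_p, then S ⊆ S′ or S′ ⊆ S. -/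
/-- Extend `x : ℝⁿ` to coordinates indexed by `{0, …, n}` with the convention `x₀ = 0`. -/
def sellingCoord {n : ℕ} (x : Fin n → ℝ) : Fin (n + 1) → ℝ := Fin.cons 0 x

/-- The Selling bilinear form `⟨x, y⟩_p = Σ_{0 ≤ i < j ≤ n} p_{ij}(x_i − x_j)(y_i − y_j)`
on `ℝⁿ`, with the convention `x₀ = y₀ = 0`. -/
noncomputable def sellingForm (n : ℕ) (p : Fin (n + 1) → Fin (n + 1) → ℝ)
    (x y : Fin n → ℝ) : ℝ :=
  ∑ i : Fin (n + 1), ∑ j : Fin (n + 1),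
    if (i : ℕ) < (j : ℕ) then
      p i j * (sellingCoord x i - sellingCoord x j) *
        (sellingCoord y i - sellingCoord y j)
    else 0

/-- The vector `v_S = Σ_{i ∈ S} v_i`, where `v_i = e_i` for `1 ≤ i ≤ n` and
`v₀ = −(e₁ + ⋯ + eₙ)`. -/
def sellingV (n : ℕ) (S : Finset (Fin (n + 1))) : Fin n → ℝ := fun j =>
  (if j.succ ∈ S then (1 : ℝ) else 0) - (if (0 : Fin (n + 1)) ∈ S then (1 : ℝ) else 0)

/-- The Voronoi cell of the lattice `ℤⁿ` with respect to the Selling form `⟨·,·⟩_p`. -/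
noncomputable def sellingVoronoiCell (n : ℕ) (p : Fin (n + 1) → Fin (n + 1) → ℝ) :
    Set (Fin n → ℝ) :=
  {x | ∀ ℓ : Fin n → ℤ,
    sellingForm n p x x ≤
      sellingForm n p (fun i => x i - (ℓ i : ℝ)) (fun i => x i - (ℓ i : ℝ))}

set_option maxHeartbeats 1000000

-- coordinates of sellingV
lemma coord_sellingV (n : ℕ) (T : Finset (Fin (n + 1))) (k : Fin (n + 1)) :
    sellingCoord (sellingV n T) k =
      (if k ∈ T then (1 : ℝ) else 0) - (if (0 : Fin (n + 1)) ∈ T then (1 : ℝ) else 0) := by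
  refine Fin.cases ?_ (fun j => ?_) k
  · simp [sellingCoord]
  · simp [sellingCoord, sellingV]


lemma coord_diff (n : ℕ) (T : Finset (Fin (n + 1))) (i j : Fin (n + 1)) :
    sellingCoord (sellingV n T) i - sellingCoord (sellingV n T) j =
      (if i ∈ T then (1 : ℝ) else 0) - (if j ∈ T then (1 : ℝ) else 0) := by
  rw [coord_sellingV, coord_sellingV]; ring

lemma sellingCoord_sub {n : ℕ} (x y : Fin n → ℝ) (k : Fin (n + 1)) :
    sellingCoord (fun i => x i - y i) k = sellingCoord x k - sellingCoord y k := by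
  refine Fin.cases ?_ (fun j => ?_) k <;> simp [sellingCoord]

lemma sellingCoord_add {n : ℕ} (x y : Fin n → ℝ) (k : Fin (n + 1)) :
    sellingCoord (fun i => x i + y i) k = sellingCoord x k + sellingCoord y k := by
  refine Fin.cases ?_ (fun j => ?_) k <;> simp [sellingCoord]

lemma form_sub (n : ℕ) (p : Fin (n + 1) → Fin (n + 1) → ℝ) (x y : Fin n → ℝ) :
    sellingForm n p (fun i => x i - y i) (fun i => x i - y i) =
      sellingForm n p x x - 2 * sellingForm n p y x + sellingForm n p y y := by
  unfold sellingForm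
  simp only [Finset.mul_sum, ← Finset.sum_sub_distrib, ← Finset.sum_add_distrib]
  refine Finset.sum_congr rfl fun i _ => Finset.sum_congr rfl fun j _ => ?_
  simp only [sellingCoord_sub]
  split_ifs <;> ring

lemma form_add_left (n : ℕ) (p : Fin (n + 1) → Fin (n + 1) → ℝ) (a b y : Fin n → ℝ) :
    sellingForm n p (fun i => a i + b i) y =
      sellingForm n p a y + sellingForm n p b y := by
  unfold sellingForm
  simp only [← Finset.sum_add_distrib]
  refine Finset.sum_congr rfl fun i _ => Finset.sum_congr rfl fun j _ => ?_
  simp only [sellingCoord_add]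
  split_ifs <;> ring

lemma voronoi_ineq (n : ℕ) (p : Fin (n + 1) → Fin (n + 1) → ℝ) (x : Fin n → ℝ)
    (hx : x ∈ sellingVoronoiCell n p) (T : Finset (Fin (n + 1))) :
    2 * sellingForm n p (sellingV n T) x ≤
      sellingForm n p (sellingV n T) (sellingV n T) := by
  set ℓ : Fin n → ℤ := fun i =>
    (if i.succ ∈ T then (1 : ℤ) else 0) - (if (0 : Fin (n + 1)) ∈ T then 1 else 0) with hℓdef
  have hℓ : ∀ i, (ℓ i : ℝ) = sellingV n T i := by
    intro i
    simp only [hℓdef, sellingV]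
    push_cast
    split_ifs <;> norm_num
  have h := hx ℓ
  rw [show (fun i => x i - (ℓ i : ℝ)) = (fun i => x i - sellingV n T i) from
    funext fun i => by rw [hℓ]] at h
  rw [form_sub] at h
  linarith

lemma v_union_inter (n : ℕ) (S S' : Finset (Fin (n + 1))) (i : Fin n) :
    sellingV n S i + sellingV n S' i =
      sellingV n (S ∪ S') i + sellingV n (S ∩ S') i := by
  simp only [sellingV, Finset.mem_union, Finset.mem_inter]
  by_cases h1 : i.succ ∈ S <;> by_cases h2 : i.succ ∈ S' <;>
    by_cases h3 : (0 : Fin (n + 1)) ∈ S <;> by_cases h4 : (0 : Fin (n + 1)) ∈ S' <;>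
    simp [h1, h2, h3, h4]

lemma norm_sum_identity (n : ℕ) (p : Fin (n + 1) → Fin (n + 1) → ℝ)
    (S S' : Finset (Fin (n + 1))) :
    sellingForm n p (sellingV n S) (sellingV n S) +
      sellingForm n p (sellingV n S') (sellingV n S') =
    sellingForm n p (sellingV n (S ∪ S')) (sellingV n (S ∪ S')) +
      sellingForm n p (sellingV n (S ∩ S')) (sellingV n (S ∩ S')) -
      2 * sellingForm n p (sellingV n (S \ S')) (sellingV n (S' \ S)) := by
  unfold sellingForm
  simp only [Finset.mul_sum, ← Finset.sum_sub_distrib, ← Finset.sum_add_distrib]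
  refine Finset.sum_congr rfl fun i _ => Finset.sum_congr rfl fun j _ => ?_
  simp only [coord_diff]
  by_cases h1 : i ∈ S <;> by_cases h2 : i ∈ S' <;>
    by_cases h3 : j ∈ S <;> by_cases h4 : j ∈ S' <;>
    simp [Finset.mem_union, Finset.mem_inter, Finset.mem_sdiff, h1, h2, h3, h4] <;>
    split_ifs <;> ring

lemma form_neg (n : ℕ) (p : Fin (n + 1) → Fin (n + 1) → ℝ)
    (hp : ∀ i j : Fin (n + 1), (i : ℕ) < (j : ℕ) → 0 < p i j)
    (A B : Finset (Fin (n + 1))) (hd : Disjoint A B)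
    (a : Fin (n + 1)) (ha : a ∈ A) (b : Fin (n + 1)) (hb : b ∈ B) :
    sellingForm n p (sellingV n A) (sellingV n B) < 0 := by
  have hAB : ∀ k, k ∈ A → k ∉ B := fun k hk => Finset.disjoint_left.mp hd hk
  have hab : a ≠ b := fun h => hAB a ha (h ▸ hb)
  unfold sellingForm
  rw [← Finset.sum_product']
  refine lt_of_lt_of_eq (Finset.sum_lt_sum (g := fun _ => (0 : ℝ)) ?_ ?_) (by simp)
  · rintro ⟨i, j⟩ -
    dsimp only
    split_ifs with h
    · simp only [coord_diff]
      have hpij := hp i j h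
      by_cases h1 : i ∈ A <;> by_cases h2 : i ∈ B <;>
        by_cases h3 : j ∈ A <;> by_cases h4 : j ∈ B <;>
        first
          | exact absurd h2 (hAB i h1)
          | exact absurd h4 (hAB j h3)
          | (simp only [h1, h2, h3, h4, if_pos, if_neg, not_false_iff]; nlinarith)
    · exact le_refl _
  · rcases Nat.lt_or_ge (a : ℕ) (b : ℕ) with hlt | hge
    · refine ⟨(a, b), Finset.mem_product.mpr ⟨Finset.mem_univ _, Finset.mem_univ _⟩, ?_⟩
      dsimp only
      rw [if_pos hlt]
      simp only [coord_diff]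
      have := hp a b hlt
      simp only [if_pos ha, if_pos hb, if_neg (hAB a ha), if_neg (fun h => hAB b h hb)]
      nlinarith
    · have hlt : (b : ℕ) < (a : ℕ) := by
        rcases Nat.lt_or_ge (b : ℕ) (a : ℕ) with h | h
        · exact h
        · exact absurd (Fin.ext (Nat.le_antisymm hge h)) hab.symm
      refine ⟨(b, a), Finset.mem_product.mpr ⟨Finset.mem_univ _, Finset.mem_univ _⟩, ?_⟩
      dsimp only
      rw [if_pos hlt]
      simp only [coord_diff]
      have := hp b a hlt
      simp only [if_pos ha, if_pos hb, if_neg (hAB a ha), if_neg (fun h => hAB b h hb)]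
      nlinarith

/-- Lemma B.7: if two facets `F_S`, `F_{S'}` of the Voronoi cell of the lattice `V̄(p)`
(given by `2⟨v_S, x⟩_p = ⟨v_S, v_S⟩_p` etc.) contain a common point of the Voronoi cell,
then `S ⊆ S'` or `S' ⊆ S`. -/
theorem statement18 (n : ℕ) (hn : 1 ≤ n) (p : Fin (n + 1) → Fin (n + 1) → ℝ)
    (hp : ∀ i j : Fin (n + 1), (i : ℕ) < (j : ℕ) → 0 < p i j)
    (S S' : Finset (Fin (n + 1)))
    (hS : S.Nonempty) (hS' : S'.Nonempty)
    (hSne : S ≠ Finset.univ) (hS'ne : S' ≠ Finset.univ)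
    (x : Fin n → ℝ) (hx : x ∈ sellingVoronoiCell n p)
    (h1 : 2 * sellingForm n p (sellingV n S) x =
      sellingForm n p (sellingV n S) (sellingV n S))
    (h2 : 2 * sellingForm n p (sellingV n S') x =
      sellingForm n p (sellingV n S') (sellingV n S')) :
    S ⊆ S' ∨ S' ⊆ S := by
  by_contra hcon
  push_neg at hcon
  obtain ⟨hns, hns'⟩ := hcon
  obtain ⟨a, haS, haS'⟩ := Finset.not_subset.mp hns
  obtain ⟨b, hbS', hbS⟩ := Finset.not_subset.mp hns'
  have hd : Disjoint (S \ S') (S' \ S) := by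
    rw [Finset.disjoint_left]
    intro k hk hk'
    rw [Finset.mem_sdiff] at hk hk'
    exact hk.2 hk'.1
  have hneg := form_neg n p hp (S \ S') (S' \ S) hd a
    (Finset.mem_sdiff.mpr ⟨haS, haS'⟩) b (Finset.mem_sdiff.mpr ⟨hbS', hbS⟩)
  have hu := voronoi_ineq n p x hx (S ∪ S')
  have hi := voronoi_ineq n p x hx (S ∩ S')
  have hsum : sellingForm n p (sellingV n S) x + sellingForm n p (sellingV n S') x =
      sellingForm n p (sellingV n (S ∪ S')) x +
        sellingForm n p (sellingV n (S ∩ S')) x := by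
    rw [← form_add_left n p (sellingV n S) (sellingV n S') x,
        ← form_add_left n p (sellingV n (S ∪ S')) (sellingV n (S ∩ S')) x]
    congr 1
    funext i
    exact v_union_inter n S S' i
  have hid := norm_sum_identity n p S S'
  linarith
end
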